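/- Deficiency Zero Theorem: let N be a WR0 network on n species and let κ be any choice of positive rate constants. Then for every x₀ ∈ ℝ^n_{>0}, the mass-action system (N,κ) has exactly one equilibrium x* in the stoichiometric compatibility class (x₀ + S_N) ∩ ℝ^n_{>0} (i.e., exactly one point x* of that set with f_{(N,κ)}(x*) = 0), and this equilibrium is asymptotically stable relative to its compatibility class: for every ε > 0 there exists δ > 0 such that every solution x : [0,∞) → ℝ^n_{>0} of dx/dt = f_{(N,κ)}(x) with x(0) ∈ (x* + S_N) ∩ ℝ^n_{>0} and ‖x(0) − x*‖ < δ satisfies ‖x(t) − x*‖ < ε for all t ≥ 0, and there exists δ₀ > 0 such that every such solution with ‖x(0) − x*‖ < δ₀ satisfies x(t) → x* as t → ∞. -/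

import Mathlib

/-!
Basic definitions for reaction networks, following the paper
"Weakly reversible deficiency zero realizations of reaction networks".
-/

noncomputable section

open Finset

/-- A complex (vertex of a Euclidean embedded graph) is a point of `ℝ^n`. -/
abbrev Cplx (n : ℕ) : Type := Fin n → ℝ

/-- A reaction network on `n` species: a finite directed graph with vertices in `ℝ^n`,
given by its finite set of edges (reactions) `y → y'` with `y ≠ y'`.
Every vertex (complex) is incident to at least one edge, since the complexes are by
definition the endpoints of the edges. -/
structure ReactionNetwork (n : ℕ) where
  reactions : Finset (Cplx n × Cplx n)
  no_loops : ∀ r ∈ reactions, r.1 ≠ r.2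

namespace ReactionNetwork

variable {n : ℕ}

/-- `κ` is a choice of positive rate constants for `N`. -/
def PosRates (N : ReactionNetwork n) (κ : Cplx n × Cplx n → ℝ) : Prop :=
  ∀ r ∈ N.reactions, 0 < κ r

/-- The monomial `x^y = x₁^{y₁} ⋯ x_n^{y_n}`. -/
def monomial (x y : Cplx n) : ℝ := ∏ i, x i ^ y i

/-- The mass-action vector field `f_{(N,κ)}(x) = ∑_{y→y'∈N} κ_{y→y'} x^y (y'-y)`. -/
def massAction (N : ReactionNetwork n) (κ : Cplx n × Cplx n → ℝ) (x : Cplx n) : Cplx n :=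
  ∑ r ∈ N.reactions, (κ r * monomial x r.1) • (r.2 - r.1)

/-- The source complexes of `N`. -/
def sources (N : ReactionNetwork n) : Finset (Cplx n) := N.reactions.image Prod.fst

/-- The complexes (vertices) of `N`. -/
def complexes (N : ReactionNetwork n) : Finset (Cplx n) :=
  N.reactions.image Prod.fst ∪ N.reactions.image Prod.snd

/-- Undirected connectivity between complexes of `N`. -/
def linked (N : ReactionNetwork n) : Cplx n → Cplx n → Prop :=
  Relation.ReflTransGen (fun u v => (u, v) ∈ N.reactions ∨ (v, u) ∈ N.reactions)

/-- The linkage class (connected component) of the complex `y`. -/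
def linkageClass (N : ReactionNetwork n) (y : Cplx n) : Set (Cplx n) :=
  {z | z ∈ N.complexes ∧ N.linked y z}

/-- The linkage class partition of `N`: the partition of its complexes into the
vertex sets of its connected components. -/
def linkagePartition (N : ReactionNetwork n) : Set (Set (Cplx n)) :=
  {C | ∃ y ∈ N.complexes, C = N.linkageClass y}

/-- The number of linkage classes of `N`. -/
def numLinkageClasses (N : ReactionNetwork n) : ℕ :=
  N.linkagePartition.ncard

/-- The stoichiometric subspace `S_N = span{y' - y | y → y' ∈ N}`. -/
def stoichSubspace (N : ReactionNetwork n) : Submodule ℝ (Cplx n) :=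
  Submodule.span ℝ {d | ∃ r ∈ N.reactions, d = r.2 - r.1}

/-- `N` is weakly reversible: every connected component is strongly connected,
i.e. every reaction is part of a directed cycle. -/
def WeaklyReversible (N : ReactionNetwork n) : Prop :=
  ∀ r ∈ N.reactions,
    Relation.ReflTransGen (fun u v => (u, v) ∈ N.reactions) r.2 r.1

/-- `N` has deficiency zero: `|V| - l - dim S_N = 0`. -/
def DeficiencyZero (N : ReactionNetwork n) : Prop :=
  N.complexes.card = N.numLinkageClasses + Module.finrank ℝ N.stoichSubspace

/-- `N` is a WR₀ network: weakly reversible and of deficiency zero. -/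
def WR0 (N : ReactionNetwork n) : Prop := N.WeaklyReversible ∧ N.DeficiencyZero

/-- `(N',κ')` is a realization of `(N,κ)`: the two mass-action systems generate the
same ODE system on the positive orthant. -/
def IsRealizationOf (N' : ReactionNetwork n) (κ' : Cplx n × Cplx n → ℝ)
    (N : ReactionNetwork n) (κ : Cplx n × Cplx n → ℝ) : Prop :=
  ∀ x : Cplx n, (∀ i, 0 < x i) → N'.massAction κ' x = N.massAction κ x

/-- `N` is realizable by `N'`: for every choice of positive rate constants `κ` for `N`
there exist positive rate constants `κ'` for `N'` generating the same ODE system. -/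
def RealizableBy (N N' : ReactionNetwork n) : Prop :=
  ∀ κ : Cplx n × Cplx n → ℝ, N.PosRates κ →
    ∃ κ' : Cplx n × Cplx n → ℝ, N'.PosRates κ' ∧ IsRealizationOf N' κ' N κ

/-- `N` is WR₀-realizable: for every choice of positive rate constants `κ`,
the mass-action system `(N,κ)` has a WR₀ realization. -/
def WR0Realizable (N : ReactionNetwork n) : Prop :=
  ∀ κ : Cplx n × Cplx n → ℝ, N.PosRates κ →
    ∃ (N' : ReactionNetwork n) (κ' : Cplx n × Cplx n → ℝ),
      N'.WR0 ∧ N'.PosRates κ' ∧ IsRealizationOf N' κ' N κ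

/-- The reactions of `N` with source complex `y`. -/
def reactionsFrom (N : ReactionNetwork n) (y : Cplx n) : Finset (Cplx n × Cplx n) :=
  N.reactions.filter (fun r => r.1 = y)

/-- `Cone_N(y)`: the cone of nonnegative combinations of the reaction vectors of
reactions of `N` with source `y`. -/
def reactionCone (N : ReactionNetwork n) (y : Cplx n) : Set (Cplx n) :=
  {w | ∃ α : Cplx n × Cplx n → ℝ, (∀ r ∈ N.reactionsFrom y, 0 ≤ α r) ∧
        w = ∑ r ∈ N.reactionsFrom y, α r • (r.2 - r.1)}

/-- The net reaction vector `w_y = ∑_{y→y'∈N} κ_{y→y'} (y' - y)` of a source complex. -/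
def netVector (N : ReactionNetwork n) (κ : Cplx n × Cplx n → ℝ) (y : Cplx n) : Cplx n :=
  ∑ r ∈ N.reactionsFrom y, κ r • (r.2 - r.1)

end ReactionNetwork


/-! ### Auxiliary development for the Deficiency Zero Theorem -/

open Finset Real

namespace DZT

variable {n : ℕ}

/-- Dot product on `Cplx n`. -/
def dt (v w : Cplx n) : ℝ := ∑ i, v i * w i

lemma dt_comm (v w : Cplx n) : dt v w = dt w v := by
  unfold dt; exact Finset.sum_congr rfl fun i _ => mul_comm _ _

lemma dt_add_right (v w u : Cplx n) : dt v (w + u) = dt v w + dt v u := by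
  unfold dt; rw [← Finset.sum_add_distrib]
  exact Finset.sum_congr rfl fun i _ => by simp [mul_add]

lemma dt_sub_right (v w u : Cplx n) : dt v (w - u) = dt v w - dt v u := by
  unfold dt; rw [← Finset.sum_sub_distrib]
  exact Finset.sum_congr rfl fun i _ => by simp [mul_sub]

lemma dt_smul_right (v : Cplx n) (c : ℝ) (w : Cplx n) : dt v (c • w) = c * dt v w := by
  unfold dt; rw [Finset.mul_sum]
  exact Finset.sum_congr rfl fun i _ => by simp [Pi.smul_apply]; ring

lemma dt_add_left (v w u : Cplx n) : dt (v + w) u = dt v u + dt w u := by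
  rw [dt_comm, dt_add_right, dt_comm u v, dt_comm u w]

lemma dt_sub_left (v w u : Cplx n) : dt (v - w) u = dt v u - dt w u := by
  rw [dt_comm, dt_sub_right, dt_comm u v, dt_comm u w]

lemma dt_smul_left (c : ℝ) (v u : Cplx n) : dt (c • v) u = c * dt v u := by
  rw [dt_comm, dt_smul_right, dt_comm u v]

lemma dt_sum_left {α : Type*} (s : Finset α) (f : α → Cplx n) (u : Cplx n) :
    dt (∑ a ∈ s, f a) u = ∑ a ∈ s, dt (f a) u := by
  classical
  induction s using Finset.induction_on with
  | empty => simp [dt]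
  | insert _ _ h ih => rw [Finset.sum_insert h, Finset.sum_insert h, dt_add_left, ih]

/-- The coordinatewise log vector. -/
def lv (x : Cplx n) : Cplx n := fun i => Real.log (x i)

/-- The positive orthant. -/
def pos : Set (Cplx n) := {x | ∀ i, 0 < x i}

lemma monomial_pos {x : Cplx n} (hx : x ∈ pos) (y : Cplx n) :
    0 < ReactionNetwork.monomial x y := by
  exact Finset.prod_pos fun i _ => Real.rpow_pos_of_pos (hx i) _

lemma monomial_eq_exp {x : Cplx n} (hx : x ∈ pos) (y : Cplx n) :
    ReactionNetwork.monomial x y = Real.exp (dt y (lv x)) := by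
  unfold ReactionNetwork.monomial dt lv
  rw [Real.exp_sum]
  exact Finset.prod_congr rfl fun i _ => by
    rw [Real.rpow_def_of_pos (hx i)]; ring_nf

lemma massAction_apply (N : ReactionNetwork n) (κ : Cplx n × Cplx n → ℝ) (x : Cplx n)
    (i : Fin n) :
    N.massAction κ x i =
      ∑ r ∈ N.reactions, (κ r * ReactionNetwork.monomial x r.1) * (r.2 i - r.1 i) := by
  unfold ReactionNetwork.massAction
  rw [Finset.sum_apply]
  exact Finset.sum_congr rfl fun r _ => by simp [Pi.smul_apply, Pi.sub_apply]

lemma dt_massAction (N : ReactionNetwork n) (κ : Cplx n × Cplx n → ℝ) (x μ : Cplx n) :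
    dt (N.massAction κ x) μ =
      ∑ r ∈ N.reactions, κ r * ReactionNetwork.monomial x r.1 * (dt r.2 μ - dt r.1 μ) := by
  unfold ReactionNetwork.massAction
  rw [dt_sum_left]
  exact Finset.sum_congr rfl fun r _ => by
    rw [dt_smul_left, dt_sub_left]

/-- Strict-convexity pointwise fact: `(log a - log b) * (a - b) ≥ 0`, zero iff `a = b`. -/
lemma log_diff_mul_diff_nonneg {a b : ℝ} (ha : 0 < a) (hb : 0 < b) :
    0 ≤ (Real.log a - Real.log b) * (a - b) := by
  rcases le_total a b with h | h
  · have h1 : Real.log a ≤ Real.log b := Real.log_le_log ha h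
    nlinarith
  · have h1 : Real.log b ≤ Real.log a := Real.log_le_log hb h
    nlinarith

lemma eq_of_log_diff_mul_diff_eq_zero {a b : ℝ} (ha : 0 < a) (hb : 0 < b)
    (h : (Real.log a - Real.log b) * (a - b) = 0) : a = b := by
  rcases mul_eq_zero.1 h with h' | h'
  · have : Real.log a = Real.log b := by linarith
    exact Real.log_injOn_pos (Set.mem_Ioi.2 ha) (Set.mem_Ioi.2 hb) this
  · linarith [sub_eq_zero.1 h']

/-- Key convexity inequality `e^a (b - a) ≤ e^b - e^a`. -/
lemma exp_ineq (a b : ℝ) : Real.exp a * (b - a) ≤ Real.exp b - Real.exp a := by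
  have h := Real.add_one_le_exp (b - a)
  have hpa := Real.exp_pos a
  have key : Real.exp (b - a) * Real.exp a = Real.exp b := by
    rw [← Real.exp_add]; ring_nf
  nlinarith [mul_le_mul_of_nonneg_right h hpa.le]

lemma exp_ineq_strict {a b : ℝ} (h : a ≠ b) :
    Real.exp a * (b - a) < Real.exp b - Real.exp a := by
  have h := Real.add_one_lt_exp (x := b - a) (by intro hc; exact h (by linarith [sub_eq_zero.1 hc]))
  have hpa := Real.exp_pos a
  have key : Real.exp (b - a) * Real.exp a = Real.exp b := by
    rw [← Real.exp_add]; ring_nf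
  nlinarith [mul_lt_mul_of_pos_right h hpa]

end DZT

namespace DZT

variable {n : ℕ}

/-- The "perp" of a set of vectors w.r.t. the dot product. -/
def dtPerp (G : Set (Cplx n)) : Submodule ℝ (Cplx n) where
  carrier := {w | ∀ g ∈ G, dt w g = 0}
  add_mem' := by intro a b ha hb g hg; rw [dt_add_left, ha g hg, hb g hg]; ring
  zero_mem' := by intro g hg; simp [dt]
  smul_mem' := by intro c a ha g hg; rw [dt_smul_left, ha g hg]; ring

lemma mem_dtPerp {G : Set (Cplx n)} {w : Cplx n} :
    w ∈ dtPerp G ↔ ∀ g ∈ G, dt w g = 0 := Iff.rfl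

section transfer

abbrev Eucl (n : ℕ) := EuclideanSpace ℝ (Fin n)

/-- The linear equivalence between `Eucl n` and `Cplx n`. -/
def eqv (n : ℕ) : Eucl n ≃ₗ[ℝ] Cplx n := WithLp.linearEquiv 2 ℝ (Fin n → ℝ)

lemma eqv_symm_apply (v : Cplx n) (i : Fin n) : (eqv n).symm v i = v i := by
  rw [eqv, WithLp.linearEquiv_symm_apply]; rfl

lemma inner_eqv_symm (v w : Cplx n) :
    (inner ℝ ((eqv n).symm v) ((eqv n).symm w) : ℝ) = dt v w := by
  rw [PiLp.inner_apply]
  exact Finset.sum_congr rfl fun i _ => by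
    rw [RCLike.inner_apply, eqv_symm_apply, eqv_symm_apply]; simp [dt, mul_comm]

lemma orth_iff (G : Set (Cplx n)) (w : Cplx n) :
    ((eqv n).symm w ∈ (Submodule.span ℝ ((eqv n).symm '' G))ᗮ) ↔ ∀ g ∈ G, dt w g = 0 := by
  constructor
  · intro h g hg
    rw [← inner_eqv_symm]
    exact (Submodule.mem_orthogonal' _ _).1 h _ (Submodule.subset_span ⟨g, hg, rfl⟩)
  · intro h
    rw [Submodule.mem_orthogonal']
    intro u hu
    induction hu using Submodule.span_induction with
    | mem x hx => obtain ⟨g, hg, rfl⟩ := hx; rw [inner_eqv_symm]; exact h g hg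
    | zero => exact inner_zero_right _
    | add x y _ _ hx hy => rw [inner_add_right, hx, hy]; ring
    | smul c x _ hx => rw [inner_smul_right, hx]; simp

/-- Membership in a span via dot-product duality. -/
lemma mem_span_iff_dt (G : Set (Cplx n)) (v : Cplx n) :
    v ∈ Submodule.span ℝ G ↔ ∀ w : Cplx n, (∀ g ∈ G, dt w g = 0) → dt w v = 0 := by
  set e := (eqv n).symm
  set K := Submodule.span ℝ (e '' G) with hK
  have h1 : v ∈ Submodule.span ℝ G ↔ e v ∈ K := by
    rw [hK]
    have himg : Submodule.span ℝ (e '' G)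
        = Submodule.map ((eqv n).symm : Cplx n →ₗ[ℝ] Eucl n) (Submodule.span ℝ G) := by
      have : (e '' G) = (((eqv n).symm : Cplx n →ₗ[ℝ] Eucl n) : Cplx n → Eucl n) '' G := rfl
      rw [this, Submodule.span_image]
    rw [himg]
    constructor
    · exact fun hv => Submodule.mem_map_of_mem hv
    · intro hv
      obtain ⟨u, hu, heq⟩ := Submodule.mem_map.1 hv
      have : u = v := (eqv n).symm.injective heq
      rwa [← this]
  rw [h1]
  have h2 : e v ∈ K ↔ e v ∈ Kᗮᗮ := by rw [Submodule.orthogonal_orthogonal]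
  rw [h2, Submodule.mem_orthogonal]
  constructor
  · intro h w hw
    have : e w ∈ Kᗮ := (orth_iff G w).2 hw
    have := h _ this
    rwa [inner_eqv_symm] at this
  · intro h u hu
    obtain ⟨w, rfl⟩ : ∃ w, e w = u := ⟨(eqv n) u, by simp [e]⟩
    rw [inner_eqv_symm]
    exact h w ((orth_iff G w).1 hu)

/-- Dimension of the perp subspace. -/
lemma finrank_dtPerp_add (G : Set (Cplx n)) :
    Module.finrank ℝ (Submodule.span ℝ G) + Module.finrank ℝ (dtPerp G) = n := by
  set K := Submodule.span ℝ ((eqv n).symm '' G) with hK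
  have hmap : Submodule.map ((eqv n).symm : Cplx n →ₗ[ℝ] Eucl n) (dtPerp G) = Kᗮ := by
    ext w'
    rw [Submodule.mem_map_equiv (e := (eqv n).symm)]
    have hw' : ∃ w, (eqv n).symm w = w' := ⟨(eqv n) w', by simp⟩
    obtain ⟨w, rfl⟩ := hw'
    have : ((eqv n).symm.symm ((eqv n).symm w)) = w := by simp
    rw [this, mem_dtPerp]
    exact (orth_iff G w).symm
  have hmap2 : Submodule.map ((eqv n).symm : Cplx n →ₗ[ℝ] Eucl n) (Submodule.span ℝ G) = K := by
    rw [hK, ← Submodule.span_image]; rfl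
  have e1 := LinearEquiv.finrank_map_eq (eqv n).symm (dtPerp G)
  have e2 := LinearEquiv.finrank_map_eq (eqv n).symm (Submodule.span ℝ G)
  rw [hmap] at e1
  rw [hmap2] at e2
  have := Submodule.finrank_add_finrank_orthogonal (𝕜 := ℝ) K
  rw [finrank_euclideanSpace, Fintype.card_fin] at this
  omega

end transfer

/-- **Stiemke's lemma**: a subspace containing no strictly positive vector is
orthogonal to some nonzero nonnegative vector. -/
lemma stiemke {ι : Type} [Fintype ι] [Nonempty ι]
    (U : Submodule ℝ (EuclideanSpace ℝ ι))
    (h : ∀ u ∈ U, ¬(∀ i, 0 < u i)) :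
    ∃ w : EuclideanSpace ℝ ι, (∀ i, 0 ≤ w i) ∧ w ≠ 0 ∧
      ∀ u ∈ U, (inner ℝ w u : ℝ) = 0 := by
  classical
  set P : Set (EuclideanSpace ℝ ι) := {v | ∀ i, 0 < v i} with hPdef
  have hPopen : IsOpen P := by
    have : P = ⋂ i, (fun v : EuclideanSpace ℝ ι => v i) ⁻¹' (Set.Ioi 0) := by
      ext v; simp [hPdef, Set.mem_iInter]
    rw [this]
    exact isOpen_iInter_of_finite fun i =>
      (isOpen_Ioi).preimage (EuclideanSpace.proj i).continuous
  have hPconv : Convex ℝ P := by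
    intro v hv w hw a b ha hb hab
    intro i
    have hva := hv i; have hwb := hw i
    have : (a • v + b • w) i = a * v i + b * w i := rfl
    rw [this]
    rcases eq_or_lt_of_le ha with rfl | ha'
    · simp at hab; subst hab; simpa using by nlinarith
    · nlinarith
  have hPne : P.Nonempty := ⟨(WithLp.equiv 2 _).symm (fun _ => 1), by
    intro i; rw [WithLp.equiv_symm_apply, PiLp.toLp_apply]; norm_num⟩
  have hdisj : Disjoint P (U : Set (EuclideanSpace ℝ ι)) := by
    rw [Set.disjoint_left]
    intro v hv hvU
    exact h v hvU hv
  obtain ⟨f, c, hfP, hfU⟩ := geometric_hahn_banach_open hPconv hPopen U.convex hdisj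
  have hfU0 : ∀ u ∈ U, f u = 0 := by
    intro u hu
    by_contra hne
    have h1 := hfU (((c - 1) / f u) • u) (U.smul_mem _ hu)
    rw [map_smul, smul_eq_mul, div_mul_cancel₀ _ hne] at h1
    linarith
  have hc : c ≤ 0 := by simpa using hfU 0 U.zero_mem
  have hfneg : ∀ v ∈ P, f v < 0 := fun v hv => lt_of_lt_of_le (hfP v hv) hc
  -- f is nonpositive on the closed nonnegative orthant
  have hfnonpos : ∀ v : EuclideanSpace ℝ ι, (∀ i, 0 ≤ v i) → f v ≤ 0 := by
    intro v hv
    by_contra hpos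
    push_neg at hpos
    set one : EuclideanSpace ℝ ι := (WithLp.equiv 2 _).symm (fun _ => 1) with hone
    have hone_pos : ∀ i, one i = 1 := fun i => by rw [hone, WithLp.equiv_symm_apply, PiLp.toLp_apply]
    set ε : ℝ := f v / (2 * (|f one| + 1)) with hε
    have hεpos : 0 < ε := by positivity
    have hmem : v + ε • one ∈ P := by
      intro i
      have : (v + ε • one) i = v i + ε * one i := rfl
      rw [this, hone_pos]
      have := hv i
      nlinarith
    have := hfneg _ hmem
    rw [map_add, map_smul, smul_eq_mul] at this
    have habs : |ε * f one| ≤ ε * (|f one| + 1) := by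
      rw [abs_mul, abs_of_pos hεpos]
      nlinarith [abs_nonneg (f one)]
    have h2 : ε * (|f one| + 1) = f v / 2 := by
      rw [hε]; field_simp
    have := neg_abs_le (ε * f one)
    linarith
  haveI : CompleteSpace (EuclideanSpace ℝ ι) := by infer_instance
  set g := (InnerProductSpace.toDual ℝ (EuclideanSpace ℝ ι)).symm f with hg
  refine ⟨-g, ?_, ?_, ?_⟩
  · intro i
    have : (-g) i = (inner ℝ (-g) (EuclideanSpace.single i (1:ℝ)) : ℝ) := by
      rw [PiLp.inner_apply]
      rw [Finset.sum_eq_single i]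
      · simp [RCLike.inner_apply, EuclideanSpace.single_apply]
      · intro j _ hj; simp [RCLike.inner_apply, EuclideanSpace.single_apply, hj]
      · intro hi; exact absurd (Finset.mem_univ i) hi
    rw [this, inner_neg_left, hg, InnerProductSpace.toDual_symm_apply]
    have : f (EuclideanSpace.single i (1:ℝ)) ≤ 0 := by
      apply hfnonpos
      intro j
      rw [EuclideanSpace.single_apply]
      split <;> norm_num
    linarith
  · intro hzero
    have hg0 : g = 0 := by
      have := neg_eq_zero.1 hzero
      exact this
    have hf0 : f = 0 := by
      rw [hg] at hg0
      have := congrArg (InnerProductSpace.toDual ℝ (EuclideanSpace ℝ ι)) hg0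
      simpa using this
    obtain ⟨v, hv⟩ := hPne
    have := hfneg v hv
    rw [hf0] at this
    simp at this
  · intro u hu
    rw [inner_neg_left, hg, InnerProductSpace.toDual_symm_apply, hfU0 u hu, neg_zero]

end DZT

namespace DZT

variable {n : ℕ}

open ReactionNetwork

/-- Directed reachability in a network. -/
def dreach (N : ReactionNetwork n) : Cplx n → Cplx n → Prop :=
  Relation.ReflTransGen (fun u v => (u, v) ∈ N.reactions)

lemma linked_symm {N : ReactionNetwork n} {y z : Cplx n} (h : N.linked y z) :
    N.linked z y := by
  refine (@Relation.ReflTransGen.stdSymm _ _ ⟨?_⟩).symm _ _ h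
  intro u v huv
  exact huv.elim Or.inr Or.inl

lemma linked_trans {N : ReactionNetwork n} {x y z : Cplx n}
    (h1 : N.linked x y) (h2 : N.linked y z) : N.linked x z := h1.trans h2

lemma linked_of_reaction {N : ReactionNetwork n} {r : Cplx n × Cplx n}
    (hr : r ∈ N.reactions) : N.linked r.1 r.2 :=
  Relation.ReflTransGen.single (Or.inl hr)

lemma dreach_of_linked {N : ReactionNetwork n} (hwr : N.WeaklyReversible)
    {y z : Cplx n} (h : N.linked y z) : dreach N y z := by
  induction h with
  | refl => exact Relation.ReflTransGen.refl
  | tail _ step ih =>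
      rcases step with hbc | hcb
      · exact ih.trans (Relation.ReflTransGen.single hbc)
      · exact ih.trans (hwr _ hcb)

lemma src_mem_complexes {N : ReactionNetwork n} {r : Cplx n × Cplx n}
    (hr : r ∈ N.reactions) : r.1 ∈ N.complexes :=
  Finset.mem_union_left _ (Finset.mem_image.2 ⟨r, hr, rfl⟩)

lemma tgt_mem_complexes {N : ReactionNetwork n} {r : Cplx n × Cplx n}
    (hr : r ∈ N.reactions) : r.2 ∈ N.complexes :=
  Finset.mem_union_right _ (Finset.mem_image.2 ⟨r, hr, rfl⟩)

lemma mem_complexes_iff {N : ReactionNetwork n} {y : Cplx n} :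
    y ∈ N.complexes ↔ ∃ r ∈ N.reactions, r.1 = y ∨ r.2 = y := by
  unfold ReactionNetwork.complexes
  rw [Finset.mem_union, Finset.mem_image, Finset.mem_image]
  constructor
  · rintro (⟨r, hr, rfl⟩ | ⟨r, hr, rfl⟩)
    · exact ⟨r, hr, Or.inl rfl⟩
    · exact ⟨r, hr, Or.inr rfl⟩
  · rintro ⟨r, hr, rfl | rfl⟩
    · exact Or.inl ⟨r, hr, rfl⟩
    · exact Or.inr ⟨r, hr, rfl⟩

lemma dt_const_on_linked {N : ReactionNetwork n} {w : Cplx n}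
    (hw : ∀ r ∈ N.reactions, dt w (r.2 - r.1) = 0) {y z : Cplx n}
    (h : N.linked y z) : dt w z = dt w y := by
  induction h with
  | refl => rfl
  | tail _ step ih =>
      rcases step with hbc | hcb
      · have := hw _ hbc; rw [dt_sub_right] at this
        simp only at this ⊢; linarith [ih]
      · have := hw _ hcb; rw [dt_sub_right] at this
        simp only at this ⊢; linarith [ih]

lemma sub_mem_stoich_of_linked {N : ReactionNetwork n} {y z : Cplx n}
    (h : N.linked y z) : z - y ∈ N.stoichSubspace := by
  induction h with
  | refl => simp
  | tail _ step ih =>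
      rename_i b c _
      have hbc : c - b ∈ N.stoichSubspace := by
        rcases step with hbc | hcb
        · exact Submodule.subset_span ⟨_, hbc, rfl⟩
        · have : b - c ∈ N.stoichSubspace := Submodule.subset_span ⟨_, hcb, rfl⟩
          have := Submodule.neg_mem _ this
          simpa using this
      have := Submodule.add_mem _ hbc ih
      simpa [sub_add_sub_cancel] using this

lemma linkageClass_eq_of_linked {N : ReactionNetwork n} {y z : Cplx n}
    (h : N.linked y z) : N.linkageClass y = N.linkageClass z := by
  ext u
  constructor
  · rintro ⟨hu, hl⟩; exact ⟨hu, (linked_symm h).trans hl⟩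
  · rintro ⟨hu, hl⟩; exact ⟨hu, h.trans hl⟩

lemma mem_own_linkageClass {N : ReactionNetwork n} {y : Cplx n}
    (hy : y ∈ N.complexes) : y ∈ N.linkageClass y :=
  ⟨hy, Relation.ReflTransGen.refl⟩

lemma linkageClass_mem_partition {N : ReactionNetwork n} {y : Cplx n}
    (hy : y ∈ N.complexes) : N.linkageClass y ∈ N.linkagePartition :=
  ⟨y, hy, rfl⟩

lemma dt_massAction_eq_zero_of_perp {N : ReactionNetwork n} {κ : Cplx n × Cplx n → ℝ}
    {w : Cplx n} (hw : ∀ r ∈ N.reactions, dt w (r.2 - r.1) = 0) (x : Cplx n) :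
    dt w (N.massAction κ x) = 0 := by
  rw [dt_comm, dt_massAction]
  apply Finset.sum_eq_zero
  intro r hr
  have := hw r hr
  rw [dt_sub_right] at this
  rw [dt_comm r.2 w, dt_comm r.1 w, this, mul_zero]

end DZT

namespace DZT

variable {n : ℕ}

open ReactionNetwork

section kernel

variable (N : ReactionNetwork n) (κ : Cplx n × Cplx n → ℝ)

/-- The source of a reaction, as an element of the complex set. -/
def rsrc (r : {r // r ∈ N.reactions}) : {y // y ∈ N.complexes} :=
  ⟨r.1.1, src_mem_complexes r.2⟩

/-- The target of a reaction, as an element of the complex set. -/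
def rtgt (r : {r // r ∈ N.reactions}) : {y // y ∈ N.complexes} :=
  ⟨r.1.2, tgt_mem_complexes r.2⟩

/-- Laplacian expression. -/
def Aex (φ : {y // y ∈ N.complexes} → ℝ) (y : {y // y ∈ N.complexes}) : ℝ :=
  ∑ r : {r // r ∈ N.reactions}, κ r.1 * φ (rsrc N r) *
    ((if rtgt N r = y then (1:ℝ) else 0) - (if rsrc N r = y then 1 else 0))

/-- Transposed Laplacian expression. -/
def Bex (z : {y // y ∈ N.complexes} → ℝ) (y : {y // y ∈ N.complexes}) : ℝ :=
  ∑ r : {r // r ∈ N.reactions}, κ r.1 * (z (rtgt N r) - z (rsrc N r)) *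
    (if rsrc N r = y then (1:ℝ) else 0)

lemma sum_ite_mul {ι : Type*} [Fintype ι] [DecidableEq ι] (a : ι) (z : ι → ℝ) :
    ∑ y : ι, (if a = y then (1:ℝ) else 0) * z y = z a := by
  simp [ite_mul]

/-- Adjointness of `Aex` and `Bex`. -/
lemma adj_AB (φ z : {y // y ∈ N.complexes} → ℝ) :
    ∑ y : {y // y ∈ N.complexes}, Aex N κ φ y * z y
      = ∑ y : {y // y ∈ N.complexes}, φ y * Bex N κ z y := by
  unfold Aex Bex
  simp only [Finset.sum_mul, Finset.mul_sum]
  rw [Finset.sum_comm]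
  conv_rhs => rw [Finset.sum_comm]
  apply Finset.sum_congr rfl
  intro r _
  have h1 : ∑ y : {y // y ∈ N.complexes},
      κ r.1 * φ (rsrc N r) *
        ((if rtgt N r = y then (1:ℝ) else 0) - (if rsrc N r = y then 1 else 0)) * z y
      = κ r.1 * φ (rsrc N r) * (z (rtgt N r) - z (rsrc N r)) := by
    have : ∀ y : {y // y ∈ N.complexes},
        κ r.1 * φ (rsrc N r) *
          ((if rtgt N r = y then (1:ℝ) else 0) - (if rsrc N r = y then 1 else 0)) * z y
        = κ r.1 * φ (rsrc N r) * ((if rtgt N r = y then (1:ℝ) else 0) * z y)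
          - κ r.1 * φ (rsrc N r) * ((if rsrc N r = y then (1:ℝ) else 0) * z y) := by
      intro y; ring
    rw [Finset.sum_congr rfl (fun y _ => this y), Finset.sum_sub_distrib,
        ← Finset.mul_sum, ← Finset.mul_sum, sum_ite_mul, sum_ite_mul]
    ring
  have h2 : ∑ y : {y // y ∈ N.complexes},
      φ y * (κ r.1 * (z (rtgt N r) - z (rsrc N r)) * (if rsrc N r = y then (1:ℝ) else 0))
      = κ r.1 * φ (rsrc N r) * (z (rtgt N r) - z (rsrc N r)) := by
    have : ∀ y : {y // y ∈ N.complexes},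
        φ y * (κ r.1 * (z (rtgt N r) - z (rsrc N r)) * (if rsrc N r = y then (1:ℝ) else 0))
        = κ r.1 * (z (rtgt N r) - z (rsrc N r)) * ((if rsrc N r = y then (1:ℝ) else 0) * φ y) := by
      intro y; ring
    rw [Finset.sum_congr rfl (fun y _ => this y), ← Finset.mul_sum, sum_ite_mul]
    ring
  rw [h1, h2]

/-- The kernel of the Laplacian, as a submodule of Euclidean space. -/
def kerA : Submodule ℝ (EuclideanSpace ℝ {y // y ∈ N.complexes}) where
  carrier := {φ | ∀ y, Aex N κ (fun u => φ u) y = 0}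
  add_mem' := by
    intro a b ha hb y
    have : Aex N κ (fun u => (a + b) u) y
        = Aex N κ (fun u => a u) y + Aex N κ (fun u => b u) y := by
      unfold Aex
      rw [← Finset.sum_add_distrib]
      apply Finset.sum_congr rfl
      intro r _
      have : (a + b) (rsrc N r) = a (rsrc N r) + b (rsrc N r) := rfl
      beta_reduce
      rw [this]; ring
    rw [this, ha y, hb y]; ring
  zero_mem' := by
    intro y
    unfold Aex
    apply Finset.sum_eq_zero
    intro r _
    have : (0 : EuclideanSpace ℝ {y // y ∈ N.complexes}) (rsrc N r) = 0 := rfl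
    beta_reduce
    rw [this]; ring
  smul_mem' := by
    intro c a ha y
    have : Aex N κ (fun u => (c • a) u) y = c * Aex N κ (fun u => a u) y := by
      unfold Aex
      rw [Finset.mul_sum]
      apply Finset.sum_congr rfl
      intro r _
      have : (c • a) (rsrc N r) = c * a (rsrc N r) := rfl
      beta_reduce
      rw [this]; ring
    rw [this, ha y]; ring

/-- The range of the transposed Laplacian, as a submodule. -/
def rangeB : Submodule ℝ (EuclideanSpace ℝ {y // y ∈ N.complexes}) where
  carrier := {w | ∃ z : {y // y ∈ N.complexes} → ℝ, ∀ y, w y = Bex N κ z y}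
  add_mem' := by
    rintro a b ⟨za, hza⟩ ⟨zb, hzb⟩
    refine ⟨za + zb, fun y => ?_⟩
    have h1 : (a + b) y = a y + b y := rfl
    rw [h1, hza y, hzb y]
    unfold Bex
    rw [← Finset.sum_add_distrib]
    apply Finset.sum_congr rfl
    intro r _
    have e1 : (za + zb) (rtgt N r) = za (rtgt N r) + zb (rtgt N r) := rfl
    have e2 : (za + zb) (rsrc N r) = za (rsrc N r) + zb (rsrc N r) := rfl
    rw [e1, e2]; ring
  zero_mem' := by
    refine ⟨0, fun y => ?_⟩
    have h1 : (0 : EuclideanSpace ℝ {y // y ∈ N.complexes}) y = 0 := rfl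
    rw [h1]
    unfold Bex
    rw [eq_comm]
    apply Finset.sum_eq_zero
    intro r _
    have e1 : (0 : {y // y ∈ N.complexes} → ℝ) (rtgt N r) = 0 := rfl
    have e2 : (0 : {y // y ∈ N.complexes} → ℝ) (rsrc N r) = 0 := rfl
    rw [e1, e2]; ring
  smul_mem' := by
    rintro c a ⟨za, hza⟩
    refine ⟨c • za, fun y => ?_⟩
    have h1 : (c • a) y = c * a y := rfl
    rw [h1, hza y]
    unfold Bex
    rw [Finset.mul_sum]
    apply Finset.sum_congr rfl
    intro r _
    have e1 : (c • za) (rtgt N r) = c * za (rtgt N r) := rfl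
    have e2 : (c • za) (rsrc N r) = c * za (rsrc N r) := rfl
    rw [e1, e2]; ring

lemma inner_euc (u v : EuclideanSpace ℝ {y // y ∈ N.complexes}) :
    (inner ℝ u v : ℝ) = ∑ y : {y // y ∈ N.complexes}, u y * v y := by
  rw [PiLp.inner_apply]
  exact Finset.sum_congr rfl fun y _ => by rw [RCLike.inner_apply]; simp [mul_comm]

/-- `kerA = (rangeB)ᗮ`. -/
lemma kerA_eq_orth : kerA N κ = (rangeB N κ)ᗮ := by
  ext u
  rw [Submodule.mem_orthogonal']
  constructor
  · intro hu v hv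
    obtain ⟨z, hz⟩ := hv
    rw [inner_euc]
    have : ∀ y : {y // y ∈ N.complexes}, u y * v y = u y * Bex N κ z y := fun y => by
      rw [hz y]
    rw [Finset.sum_congr rfl fun y _ => this y, ← adj_AB]
    apply Finset.sum_eq_zero
    intro y _
    rw [hu y, zero_mul]
  · intro hu y
    -- use v := the image of (fun w => Aex u w) under Bex?  No: test against z := δ-functions.
    -- Instead: ∑_y (Aex u y)^2 = ⟪u, B (Aex u)⟫ = 0
    have key : ∑ w : {y // y ∈ N.complexes}, Aex N κ (fun t => u t) w * Aex N κ (fun t => u t) w = 0 := by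
      have hmem : ((WithLp.equiv 2 _).symm (fun w => Bex N κ (fun t => Aex N κ (fun s => u s) t) w)
          : EuclideanSpace ℝ {y // y ∈ N.complexes}) ∈ rangeB N κ := by
        refine ⟨fun t => Aex N κ (fun s => u s) t, fun w => ?_⟩
        rw [WithLp.equiv_symm_apply, PiLp.toLp_apply]
      have h0 := hu _ hmem
      rw [inner_euc] at h0
      have h1 : ∑ y : {y // y ∈ N.complexes}, u y * Bex N κ (fun t => Aex N κ (fun s => u s) t) y = 0 := by
        rw [← h0]
        apply Finset.sum_congr rfl
        intro w _
        rw [WithLp.equiv_symm_apply, PiLp.toLp_apply]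
      calc ∑ w : {y // y ∈ N.complexes}, Aex N κ (fun t => u t) w * Aex N κ (fun t => u t) w
          = ∑ y : {y // y ∈ N.complexes}, (fun t => u t) y * Bex N κ (fun t => Aex N κ (fun s => u s) t) y :=
            adj_AB N κ (fun t => u t) (fun t => Aex N κ (fun s => u s) t)
        _ = 0 := h1
    have hnn : ∀ w ∈ (Finset.univ : Finset {y // y ∈ N.complexes}),
        0 ≤ Aex N κ (fun t => u t) w * Aex N κ (fun t => u t) w :=
      fun w _ => mul_self_nonneg _
    have := (Finset.sum_eq_zero_iff_of_nonneg hnn).1 key y (Finset.mem_univ y)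
    exact mul_self_eq_zero.1 this

end kernel

end DZT

namespace DZT

variable {n : ℕ}

open ReactionNetwork

section kernel

variable (N : ReactionNetwork n) (κ : Cplx n × Cplx n → ℝ)

lemma linked_of_dreach {y z : Cplx n} (h : dreach N y z) : N.linked y z := by
  induction h with
  | refl => exact Relation.ReflTransGen.refl
  | tail _ step ih => exact ih.tail (Or.inl step)

lemma max_step (hκ : N.PosRates κ) {z : {y // y ∈ N.complexes} → ℝ}
    (hw : ∀ y, 0 ≤ Bex N κ z y) (u : {y // y ∈ N.complexes})
    (hmax : ∀ v, N.linked u.1 v.1 → z v ≤ z u)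
    (r : {r // r ∈ N.reactions}) (hr : rsrc N r = u) : z (rtgt N r) = z u := by
  classical
  have hterm : ∀ s : {r // r ∈ N.reactions},
      κ s.1 * (z (rtgt N s) - z (rsrc N s)) * (if rsrc N s = u then (1:ℝ) else 0) ≤ 0 := by
    intro s
    by_cases hs : rsrc N s = u
    · rw [if_pos hs]
      have hlink : N.linked u.1 (rtgt N s).1 := by
        rw [← hs]
        exact linked_of_reaction s.2
      have hle : z (rtgt N s) ≤ z u := hmax _ hlink
      have hk := hκ s.1 s.2
      rw [hs]
      nlinarith
    · rw [if_neg hs]; ring_nf; simp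
  have hsum := hw u
  unfold Bex at hsum
  have hzero : ∀ s ∈ (Finset.univ : Finset {r // r ∈ N.reactions}),
      κ s.1 * (z (rtgt N s) - z (rsrc N s)) * (if rsrc N s = u then (1:ℝ) else 0) = 0 := by
    rw [← Finset.sum_eq_zero_iff_of_nonpos (fun s _ => hterm s)]
    have h2 := Finset.sum_nonpos (s := (Finset.univ : Finset {r // r ∈ N.reactions}))
      (f := fun s : {r // r ∈ N.reactions} =>
        κ s.1 * (z (rtgt N s) - z (rsrc N s)) * (if rsrc N s = u then (1:ℝ) else 0))
      (fun s _ => hterm s)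
    linarith
  have := hzero r (Finset.mem_univ r)
  rw [if_pos hr, hr] at this
  have hk := hκ r.1 r.2
  have : z (rtgt N r) - z u = 0 := by
    rcases mul_eq_zero.1 (by linarith [this] : κ r.1 * (z (rtgt N r) - z u) = 0) with h | h
    · linarith
    · exact h
  linarith

lemma max_prop (hκ : N.PosRates κ) {z : {y // y ∈ N.complexes} → ℝ}
    (hw : ∀ y, 0 ≤ Bex N κ z y) (u : {y // y ∈ N.complexes})
    (hmax : ∀ v, N.linked u.1 v.1 → z v ≤ z u) :
    ∀ (c : Cplx n), dreach N u.1 c → ∀ (hc : c ∈ N.complexes),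
      z ⟨c, hc⟩ = z u ∧ (∀ v, N.linked c v.1 → z v ≤ z ⟨c, hc⟩) := by
  intro c hdc
  induction hdc with
  | refl =>
      intro hc
      have : (⟨u.1, hc⟩ : {y // y ∈ N.complexes}) = u := Subtype.ext rfl
      rw [this]
      exact ⟨rfl, hmax⟩
  | tail hpath hstep ih =>
      rename_i b c'
      intro hc
      have hb : b ∈ N.complexes := src_mem_complexes (r := (b, c')) hstep
      obtain ⟨ihz, ihmax⟩ := ih hb
      set r : {r // r ∈ N.reactions} := ⟨(b, c'), hstep⟩ with hrdef
      have hsrc : rsrc N r = ⟨b, hb⟩ := Subtype.ext rfl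
      have htgt : rtgt N r = ⟨c', hc⟩ := Subtype.ext rfl
      have hzc : z ⟨c', hc⟩ = z ⟨b, hb⟩ := by
        rw [← htgt]
        exact max_step N κ hκ hw ⟨b, hb⟩ ihmax r hsrc
      constructor
      · rw [hzc, ihz]
      · intro v hv
        have hlink : N.linked u.1 v.1 := by
          have h1 : N.linked u.1 b := linked_of_dreach N hpath
          have h2 : N.linked b c' := linked_of_reaction (r := (b, c')) hstep
          exact (h1.trans h2).trans hv
        rw [hzc, ihz]
        exact hmax v hlink

lemma max_principle (hκ : N.PosRates κ) (hwr : N.WeaklyReversible)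
    {z : {y // y ∈ N.complexes} → ℝ} (hw : ∀ y, 0 ≤ Bex N κ z y) :
    ∀ r : {r // r ∈ N.reactions}, z (rtgt N r) = z (rsrc N r) := by
  classical
  intro r
  set F : Finset {y // y ∈ N.complexes} :=
    Finset.univ.filter (fun v => N.linked r.1.1 v.1) with hF
  have hFne : F.Nonempty := ⟨rsrc N r, by
    rw [hF, Finset.mem_filter]
    exact ⟨Finset.mem_univ _, Relation.ReflTransGen.refl⟩⟩
  obtain ⟨u, huF, humax⟩ := Finset.exists_max_image F z hFne
  rw [hF, Finset.mem_filter] at huF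
  have hmax : ∀ v, N.linked u.1 v.1 → z v ≤ z u := by
    intro v hv
    apply humax
    rw [hF, Finset.mem_filter]
    exact ⟨Finset.mem_univ _, huF.2.trans hv⟩
  have hdreach : dreach N u.1 r.1.1 := dreach_of_linked hwr (linked_symm huF.2)
  obtain ⟨hz1, hmax1⟩ := max_prop N κ hκ hw u hmax r.1.1 hdreach (src_mem_complexes r.2)
  have hsrc : (⟨r.1.1, src_mem_complexes r.2⟩ : {y // y ∈ N.complexes}) = rsrc N r :=
    Subtype.ext rfl
  rw [hsrc] at hz1 hmax1
  exact (max_step N κ hκ hw (rsrc N r) hmax1 r rfl).trans rfl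

/-- Existence of a positive "complex-balanced" weight vector on the complexes. -/
lemma exists_pos_balance (hκ : N.PosRates κ) (hwr : N.WeaklyReversible) :
    ∃ b : Cplx n → ℝ, (∀ y ∈ N.complexes, 0 < b y) ∧
      ∀ y ∈ N.complexes,
        ∑ r ∈ N.reactions.filter (fun r => r.2 = y), κ r * b r.1
          = (∑ r ∈ N.reactionsFrom y, κ r) * b y := by
  classical
  by_cases hcne : N.complexes.Nonempty
  swap
  · refine ⟨fun _ => 1, fun y hy => absurd ⟨y, hy⟩ hcne, fun y hy => absurd ⟨y, hy⟩ hcne⟩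
  haveI : Nonempty {y // y ∈ N.complexes} := ⟨⟨hcne.choose, hcne.choose_spec⟩⟩
  -- existence of a positive kernel vector
  have hker : ∃ φ : EuclideanSpace ℝ {y // y ∈ N.complexes},
      φ ∈ kerA N κ ∧ ∀ y, 0 < φ y := by
    by_contra hno
    push_neg at hno
    obtain ⟨w, hw0, hwne, hworth⟩ := stiemke (kerA N κ) (fun u hu => by
      intro hpos
      exact absurd hpos ((fun h => by
        obtain ⟨y, hy⟩ := hno u h
        intro hp
        exact absurd (hp y) (by simpa using hy)) hu))
    have hworth' : w ∈ (kerA N κ)ᗮ := (Submodule.mem_orthogonal' _ _).2 hworth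
    rw [kerA_eq_orth, Submodule.orthogonal_orthogonal] at hworth'
    obtain ⟨z, hz⟩ := hworth'
    have hBnn : ∀ y, 0 ≤ Bex N κ z y := fun y => by rw [← hz y]; exact hw0 y
    have hconst := max_principle N κ hκ hwr hBnn
    apply hwne
    apply (WithLp.equiv 2 _).injective
    funext y
    change w y = _
    have : w y = Bex N κ z y := hz y
    rw [this]
    have : Bex N κ z y = 0 := by
      unfold Bex
      apply Finset.sum_eq_zero
      intro s _
      rw [hconst s]
      ring
    rw [this]
    rfl
  obtain ⟨u, huker, hupos⟩ := hker
  set b : Cplx n → ℝ := fun y => if h : y ∈ N.complexes then u ⟨y, h⟩ else 1 with hb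
  refine ⟨b, ?_, ?_⟩
  · intro y hy
    rw [hb]
    simp only [dif_pos hy]
    exact hupos _
  · intro y hy
    have hA := huker ⟨y, hy⟩
    unfold Aex at hA
    have hsplit : ∑ r : {r // r ∈ N.reactions}, κ r.1 * u (rsrc N r) *
        ((if rtgt N r = ⟨y, hy⟩ then (1:ℝ) else 0) - (if rsrc N r = ⟨y, hy⟩ then 1 else 0))
        = (∑ r : {r // r ∈ N.reactions}, κ r.1 * u (rsrc N r) *
            (if rtgt N r = ⟨y, hy⟩ then (1:ℝ) else 0))
          - ∑ r : {r // r ∈ N.reactions}, κ r.1 * u (rsrc N r) *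
            (if rsrc N r = ⟨y, hy⟩ then (1:ℝ) else 0) := by
      rw [← Finset.sum_sub_distrib]
      exact Finset.sum_congr rfl fun r _ => by ring
    rw [hsplit] at hA
    have claim1 : ∑ r : {r // r ∈ N.reactions}, κ r.1 * u (rsrc N r) *
        (if rtgt N r = ⟨y, hy⟩ then (1:ℝ) else 0)
        = ∑ r ∈ N.reactions.filter (fun r => r.2 = y), κ r * b r.1 := by
      rw [Finset.sum_filter]
      rw [← Finset.sum_coe_sort N.reactions (fun r => if r.2 = y then κ r * b r.1 else 0)]
      apply Finset.sum_congr rfl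
      intro r _
      by_cases h : r.1.2 = y
      · rw [if_pos h, if_pos (Subtype.ext h : rtgt N r = ⟨y, hy⟩)]
        rw [hb]
        simp only [dif_pos (src_mem_complexes r.2)]
        have : u (rsrc N r) = u ⟨r.1.1, src_mem_complexes r.2⟩ := rfl
        rw [this]; ring
      · rw [if_neg h, if_neg (fun hc => h (congrArg Subtype.val hc))]
        ring
    have claim2 : ∑ r : {r // r ∈ N.reactions}, κ r.1 * u (rsrc N r) *
        (if rsrc N r = ⟨y, hy⟩ then (1:ℝ) else 0)
        = (∑ r ∈ N.reactionsFrom y, κ r) * b y := by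
      unfold ReactionNetwork.reactionsFrom
      rw [Finset.sum_mul, Finset.sum_filter]
      rw [← Finset.sum_coe_sort N.reactions (fun r => if r.1 = y then κ r * b y else 0)]
      apply Finset.sum_congr rfl
      intro r _
      by_cases h : r.1.1 = y
      · rw [if_pos h, if_pos (Subtype.ext h : rsrc N r = ⟨y, hy⟩)]
        rw [hb]
        simp only [dif_pos hy]
        have : u (rsrc N r) = u ⟨r.1.1, src_mem_complexes r.2⟩ := rfl
        rw [this]
        have : (⟨r.1.1, src_mem_complexes r.2⟩ : {y // y ∈ N.complexes}) = ⟨y, hy⟩ :=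
          Subtype.ext h
        rw [this]; ring
      · rw [if_neg h, if_neg (fun hc => h (congrArg Subtype.val hc))]
        ring
    rw [claim1, claim2] at hA
    linarith
end kernel

end DZT

namespace DZT

variable {n : ℕ}

open ReactionNetwork

section def0

variable (N : ReactionNetwork n) (κ : Cplx n × Cplx n → ℝ)

/-- Generating set of the stoichiometric subspace. -/
def gens (N : ReactionNetwork n) : Set (Cplx n) := {d | ∃ r ∈ N.reactions, d = r.2 - r.1}

lemma stoich_eq_span : N.stoichSubspace = Submodule.span ℝ (gens N) := rfl

lemma mem_dtPerp_gens {w : Cplx n} :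
    w ∈ dtPerp (gens N) ↔ ∀ r ∈ N.reactions, dt w (r.2 - r.1) = 0 := by
  rw [mem_dtPerp]
  constructor
  · intro h r hr; exact h _ ⟨r, hr, rfl⟩
  · rintro h g ⟨r, hr, rfl⟩; exact h r hr

/-- Functions on complexes that are constant on linkage classes. -/
def constC (N : ReactionNetwork n) : Submodule ℝ ({y // y ∈ N.complexes} → ℝ) where
  carrier := {c | ∀ u v : {y // y ∈ N.complexes}, N.linked u.1 v.1 → c u = c v}
  add_mem' := fun ha hb u v huv => by
    rw [Pi.add_apply, Pi.add_apply, ha u v huv, hb u v huv]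
  zero_mem' := fun u v _ => rfl
  smul_mem' := fun c a ha u v huv => by
    rw [Pi.smul_apply, Pi.smul_apply, ha u v huv]

/-- The linear map underlying the deficiency-zero argument. -/
def defPhi (N : ReactionNetwork n) :
    (Cplx n × constC N) →ₗ[ℝ] ({y // y ∈ N.complexes} → ℝ) where
  toFun p := fun y => dt y.1 p.1 - p.2.1 y
  map_add' p q := by
    funext y
    have h1 : (p + q).1 = p.1 + q.1 := rfl
    have h2 : ((p + q).2 : {y // y ∈ N.complexes} → ℝ) = p.2.1 + q.2.1 := rfl
    rw [Pi.add_apply]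
    beta_reduce
    rw [h1, h2, dt_add_right, Pi.add_apply]
    ring
  map_smul' a p := by
    funext y
    have h1 : (a • p).1 = a • p.1 := rfl
    have h2 : ((a • p).2 : {y // y ∈ N.complexes} → ℝ) = a • (p.2 : _ → ℝ) := rfl
    simp only [RingHom.id_apply, Pi.smul_apply]
    beta_reduce
    rw [h1, h2, dt_smul_right, Pi.smul_apply]
    simp [smul_eq_mul]
    ring

lemma finrank_constC : Module.finrank ℝ (constC N) = N.numLinkageClasses := by
  classical
  have hPfin : N.linkagePartition.Finite := by
    apply Set.Finite.subset ((N.complexes : Set (Cplx n)).toFinite.image N.linkageClass)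
    rintro C ⟨y, hy, rfl⟩
    exact ⟨y, hy, rfl⟩
  haveI := hPfin.fintype
  have hrep : ∀ C : {C // C ∈ N.linkagePartition},
      ∃ y, y ∈ N.complexes ∧ C.1 = N.linkageClass y := by
    rintro ⟨C, y, hy, rfl⟩
    exact ⟨y, hy, rfl⟩
  set rep : {C // C ∈ N.linkagePartition} → Cplx n := fun C => (hrep C).choose with hrepdef
  have hrepmem : ∀ C, rep C ∈ N.complexes := fun C => (hrep C).choose_spec.1
  have hrepeq : ∀ C, C.1 = N.linkageClass (rep C) := fun C => (hrep C).choose_spec.2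
  have e : constC N ≃ₗ[ℝ] ({C // C ∈ N.linkagePartition} → ℝ) := by
    refine
      { toFun := fun c => fun C => c.1 ⟨rep C, hrepmem C⟩
        invFun := fun g => ⟨fun y => g ⟨N.linkageClass y.1, linkageClass_mem_partition y.2⟩, ?_⟩
        map_add' := fun a b => rfl
        map_smul' := fun a b => rfl
        left_inv := ?_
        right_inv := ?_ }
    · intro u v huv
      exact congrArg g (Subtype.ext (linkageClass_eq_of_linked huv))
    · intro c
      apply Subtype.ext
      funext y
      have hC : N.linkageClass y.1 = N.linkageClass
          (rep ⟨N.linkageClass y.1, linkageClass_mem_partition y.2⟩) :=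
        hrepeq ⟨N.linkageClass y.1, linkageClass_mem_partition y.2⟩
      have hmem : rep ⟨N.linkageClass y.1, linkageClass_mem_partition y.2⟩
          ∈ N.linkageClass y.1 := by
        have h := mem_own_linkageClass (hrepmem ⟨N.linkageClass y.1, linkageClass_mem_partition y.2⟩)
        rwa [← hC] at h
      exact c.2 _ y (linked_symm hmem.2)
    · intro g
      funext C
      exact congrArg g (Subtype.ext (hrepeq C).symm)
  rw [e.finrank_eq, Module.finrank_pi]
  unfold ReactionNetwork.numLinkageClasses
  rw [← Nat.card_coe_set_eq, Nat.card_eq_fintype_card]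

set_option synthInstance.maxHeartbeats 1000000 in
set_option maxHeartbeats 1000000 in
lemma finrank_ker_defPhi :
    Module.finrank ℝ (LinearMap.ker (defPhi N)) = Module.finrank ℝ (dtPerp (gens N)) := by
  have e : dtPerp (gens N) ≃ₗ[ℝ] LinearMap.ker (defPhi N) := by
    refine
      { toFun := fun w => ⟨(w.1, ⟨fun y => dt y.1 w.1, ?_⟩), ?_⟩
        invFun := fun p => ⟨p.1.1, ?_⟩
        map_add' := ?_
        map_smul' := ?_
        left_inv := fun w => rfl
        right_inv := ?_ }
    · intro u v huv
      beta_reduce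
      rw [dt_comm, dt_comm v.1]
      exact (dt_const_on_linked ((mem_dtPerp_gens N).1 w.2) huv).symm
    · rw [LinearMap.mem_ker]
      funext y
      show dt y.1 w.1 - dt y.1 w.1 = 0
      ring
    · intro w₁ w₂
      apply Subtype.ext
      apply Prod.ext
      · rfl
      · apply Subtype.ext
        funext y
        show dt y.1 ((w₁ + w₂ : ↥(dtPerp (gens N))).1) = dt y.1 w₁.1 + dt y.1 w₂.1
        rw [show ((w₁ + w₂ : ↥(dtPerp (gens N))).1) = w₁.1 + w₂.1 from rfl, dt_add_right]
    · intro a w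
      apply Subtype.ext
      apply Prod.ext
      · rfl
      · apply Subtype.ext
        funext y
        show dt y.1 ((a • w : ↥(dtPerp (gens N))).1) = a * dt y.1 w.1
        rw [show ((a • w : ↥(dtPerp (gens N))).1) = a • w.1 from rfl, dt_smul_right]
    · rw [mem_dtPerp_gens]
      intro r hr
      have hker := p.2
      rw [LinearMap.mem_ker] at hker
      have h1 : dt (⟨r.1, src_mem_complexes hr⟩ : {y // y ∈ N.complexes}).1 p.1.1
          - p.1.2.1 ⟨r.1, src_mem_complexes hr⟩ = 0 := congrFun hker _
      have h2 : dt (⟨r.2, tgt_mem_complexes hr⟩ : {y // y ∈ N.complexes}).1 p.1.1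
          - p.1.2.1 ⟨r.2, tgt_mem_complexes hr⟩ = 0 := congrFun hker _
      have h3 : p.1.2.1 ⟨r.1, src_mem_complexes hr⟩ = p.1.2.1 ⟨r.2, tgt_mem_complexes hr⟩ :=
        p.1.2.2 _ _ (linked_of_reaction hr)
      simp only at h1 h2
      rw [dt_sub_right, dt_comm p.1.1 r.2, dt_comm p.1.1 r.1]
      linarith
    · intro p
      apply Subtype.ext
      apply Prod.ext
      · rfl
      · apply Subtype.ext
        funext y
        show dt y.1 p.1.1 = p.1.2.1 y
        have hker := p.2
        rw [LinearMap.mem_ker] at hker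
        have := congrFun hker y
        show dt y.1 p.1.1 = p.1.2.1 y
        have h1 : dt y.1 p.1.1 - p.1.2.1 y = 0 := this
        linarith
  exact (e.finrank_eq).symm

/-- Surjectivity of `defPhi` for deficiency-zero networks. -/
lemma defPhi_surjective (hdef : N.DeficiencyZero) :
    Function.Surjective (defPhi N) := by
  classical
  have h1 := LinearMap.finrank_range_add_finrank_ker (defPhi N)
  have h2 : Module.finrank ℝ (Cplx n × constC N)
      = n + N.numLinkageClasses := by
    rw [Module.finrank_prod, finrank_constC]
    congr 1
    rw [Module.finrank_pi, Fintype.card_fin]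
  have h3 := finrank_dtPerp_add (gens N)
  have h4 : Module.finrank ℝ ({y // y ∈ N.complexes} → ℝ) = N.complexes.card := by
    rw [Module.finrank_pi, Fintype.card_coe]
  have h5 : N.complexes.card
      = N.numLinkageClasses + Module.finrank ℝ (Submodule.span ℝ (gens N)) := hdef
  have h6 := finrank_ker_defPhi N
  have hrange : Module.finrank ℝ (LinearMap.range (defPhi N))
      = Module.finrank ℝ ({y // y ∈ N.complexes} → ℝ) := by
    rw [h4]
    omega
  rw [← LinearMap.range_eq_top]
  exact Submodule.eq_top_of_finrank_eq hrange

/-- Complex balancing of a state. -/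
def CBal (N : ReactionNetwork n) (κ : Cplx n × Cplx n → ℝ) (xs : Cplx n) : Prop :=
  ∀ y ∈ N.complexes,
    ∑ r ∈ N.reactions.filter (fun r => r.2 = y), κ r * ReactionNetwork.monomial xs r.1
      = (∑ r ∈ N.reactionsFrom y, κ r) * ReactionNetwork.monomial xs y

/-- Existence of a positive complex-balanced state for WR₀ networks. -/
lemma exists_CB (hκ : N.PosRates κ) (hN : N.WR0) :
    ∃ xs : Cplx n, xs ∈ pos ∧ CBal N κ xs := by
  classical
  obtain ⟨b, hbpos, hbbal⟩ := exists_pos_balance N κ hκ hN.1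
  obtain ⟨p, hp⟩ := defPhi_surjective N hN.2 (fun y => Real.log (b y.1))
  obtain ⟨u, c⟩ := p
  set xs : Cplx n := fun i => Real.exp (u i) with hxs
  have hxpos : xs ∈ pos := fun i => Real.exp_pos _
  have hlv : lv xs = u := by
    funext i
    rw [hxs]
    exact Real.log_exp _
  have hmono : ∀ y : Cplx n, ReactionNetwork.monomial xs y = Real.exp (dt y u) := by
    intro y
    rw [monomial_eq_exp hxpos, hlv]
  have hval : ∀ y : {y // y ∈ N.complexes},
      ReactionNetwork.monomial xs y.1 = b y.1 * Real.exp (c.1 y) := by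
    intro y
    have := congrFun hp y
    have heq : dt y.1 u - c.1 y = Real.log (b y.1) := this
    rw [hmono]
    have : dt y.1 u = Real.log (b y.1) + c.1 y := by linarith
    rw [this, Real.exp_add, Real.exp_log (hbpos y.1 y.2)]
  refine ⟨xs, hxpos, ?_⟩
  intro y hy
  have hLHS : ∑ r ∈ N.reactions.filter (fun r => r.2 = y), κ r * ReactionNetwork.monomial xs r.1
      = Real.exp (c.1 ⟨y, hy⟩) * ∑ r ∈ N.reactions.filter (fun r => r.2 = y), κ r * b r.1 := by
    rw [Finset.mul_sum]
    apply Finset.sum_congr rfl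
    intro r hr
    rw [Finset.mem_filter] at hr
    have hrsrc : r.1 ∈ N.complexes := src_mem_complexes hr.1
    have := hval ⟨r.1, hrsrc⟩
    simp only at this
    rw [this]
    have hcc : c.1 ⟨r.1, hrsrc⟩ = c.1 ⟨y, hy⟩ := c.2 _ _ (by
      have := linked_of_reaction hr.1
      rwa [hr.2] at this)
    rw [hcc]
    ring
  rw [hLHS, hbbal y hy]
  have := hval ⟨y, hy⟩
  simp only at this
  rw [this]
  ring

end def0

end DZT

namespace DZT

variable {n : ℕ}

open ReactionNetwork

section HJ

variable (N : ReactionNetwork n) (κ : Cplx n × Cplx n → ℝ)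

/-- Transport identity for complex-balanced states. -/
lemma CBal.transport {xs : Cplx n} (hcb : CBal N κ xs) (g : Cplx n → ℝ) :
    ∑ r ∈ N.reactions, κ r * ReactionNetwork.monomial xs r.1 * g r.2
      = ∑ r ∈ N.reactions, κ r * ReactionNetwork.monomial xs r.1 * g r.1 := by
  classical
  rw [← Finset.sum_fiberwise_of_maps_to (g := fun r : Cplx n × Cplx n => r.2)
      (t := N.complexes) (fun r hr => tgt_mem_complexes hr)
      (fun r => κ r * ReactionNetwork.monomial xs r.1 * g r.2)]
  rw [← Finset.sum_fiberwise_of_maps_to (g := fun r : Cplx n × Cplx n => r.1)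
      (t := N.complexes) (fun r hr => src_mem_complexes hr)
      (fun r => κ r * ReactionNetwork.monomial xs r.1 * g r.1)]
  apply Finset.sum_congr rfl
  intro y hy
  have hL : ∑ r ∈ N.reactions.filter (fun r => r.2 = y),
      κ r * ReactionNetwork.monomial xs r.1 * g r.2
      = g y * ∑ r ∈ N.reactions.filter (fun r => r.2 = y),
          κ r * ReactionNetwork.monomial xs r.1 := by
    rw [Finset.mul_sum]
    apply Finset.sum_congr rfl
    intro r hr
    rw [Finset.mem_filter] at hr
    rw [hr.2]; ring
  have hR : ∑ r ∈ N.reactions.filter (fun r => r.1 = y),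
      κ r * ReactionNetwork.monomial xs r.1 * g r.1
      = g y * ((∑ r ∈ N.reactionsFrom y, κ r) * ReactionNetwork.monomial xs y) := by
    unfold ReactionNetwork.reactionsFrom
    calc ∑ r ∈ N.reactions.filter (fun r => r.1 = y),
          κ r * ReactionNetwork.monomial xs r.1 * g r.1
        = ∑ r ∈ N.reactions.filter (fun r => r.1 = y),
            g y * (κ r * ReactionNetwork.monomial xs y) := by
          apply Finset.sum_congr rfl
          intro r hr
          rw [Finset.mem_filter] at hr
          rw [hr.2]; ring
      _ = g y * ∑ r ∈ N.reactions.filter (fun r => r.1 = y),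
            κ r * ReactionNetwork.monomial xs y := by rw [Finset.mul_sum]
      _ = g y * ((∑ r ∈ N.reactions.filter (fun r => r.1 = y), κ r)
            * ReactionNetwork.monomial xs y) := by rw [Finset.sum_mul]
  rw [hL, hR, hcb y hy]

/-- A complex-balanced state is an equilibrium. -/
lemma CBal.massAction_eq_zero {xs : Cplx n} (hcb : CBal N κ xs) :
    N.massAction κ xs = 0 := by
  funext i
  rw [massAction_apply]
  have : ∀ r ∈ N.reactions, κ r * ReactionNetwork.monomial xs r.1 * (r.2 i - r.1 i)
      = κ r * ReactionNetwork.monomial xs r.1 * r.2 i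
        - κ r * ReactionNetwork.monomial xs r.1 * r.1 i := fun r _ => by ring
  rw [Finset.sum_congr rfl this, Finset.sum_sub_distrib,
      hcb.transport N κ (fun y => y i), sub_self]
  rfl

/-- Scaling a complex-balanced state by `exp` of a stoichiometrically
orthogonal vector preserves complex balancing. -/
lemma CBal.scale {xs : Cplx n} (hxs : xs ∈ pos) (hcb : CBal N κ xs) {v : Cplx n}
    (hv : ∀ r ∈ N.reactions, dt v (r.2 - r.1) = 0) :
    (fun i => xs i * Real.exp (v i)) ∈ pos ∧ CBal N κ (fun i => xs i * Real.exp (v i)) := by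
  set z : Cplx n := fun i => xs i * Real.exp (v i) with hzdef
  have hz : z ∈ pos := fun i => mul_pos (hxs i) (Real.exp_pos _)
  have hlv : lv z = fun i => Real.log (xs i) + v i := by
    funext i
    rw [hzdef]
    show Real.log (xs i * Real.exp (v i)) = _
    rw [Real.log_mul (ne_of_gt (hxs i)) (ne_of_gt (Real.exp_pos _)), Real.log_exp]
  have hmono : ∀ y : Cplx n, ReactionNetwork.monomial z y
      = ReactionNetwork.monomial xs y * Real.exp (dt y v) := by
    intro y
    rw [monomial_eq_exp hz, monomial_eq_exp hxs, hlv]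
    have : dt y (fun i => Real.log (xs i) + v i) = dt y (lv xs) + dt y v := by
      unfold dt lv
      rw [← Finset.sum_add_distrib]
      exact Finset.sum_congr rfl fun i _ => by ring
    rw [this, Real.exp_add]
  refine ⟨hz, ?_⟩
  intro y hy
  have hL : ∑ r ∈ N.reactions.filter (fun r => r.2 = y), κ r * ReactionNetwork.monomial z r.1
      = Real.exp (dt y v) * ∑ r ∈ N.reactions.filter (fun r => r.2 = y),
          κ r * ReactionNetwork.monomial xs r.1 := by
    rw [Finset.mul_sum]
    apply Finset.sum_congr rfl
    intro r hr
    rw [Finset.mem_filter] at hr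
    rw [hmono r.1]
    have hdt : dt r.1 v = dt y v := by
      have := hv r hr.1
      rw [dt_sub_right] at this
      have h1 : dt v r.1 = dt v r.2 := by linarith
      rw [dt_comm r.1 v, dt_comm y v, h1, hr.2]
    rw [hdt]; ring
  rw [hL, hcb y hy, hmono y]
  ring

/-- The Horn–Jackson inequality. -/
lemma hj_ineq (hκ : N.PosRates κ) {xs z : Cplx n} (hxs : xs ∈ pos) (hcb : CBal N κ xs)
    (hz : z ∈ pos) :
    dt (N.massAction κ z) (lv z - lv xs) ≤ 0 ∧
      (dt (N.massAction κ z) (lv z - lv xs) = 0 →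
        ∀ r ∈ N.reactions, dt (lv z - lv xs) (r.2 - r.1) = 0) := by
  set μ : Cplx n := lv z - lv xs with hμ
  have hmz : ∀ y : Cplx n, ReactionNetwork.monomial z y
      = ReactionNetwork.monomial xs y * Real.exp (dt y μ) := by
    intro y
    rw [monomial_eq_exp hz, monomial_eq_exp hxs, hμ, dt_sub_right, ← Real.exp_add]
    congr 1
    ring
  have hfd : dt (N.massAction κ z) μ = ∑ r ∈ N.reactions,
      κ r * ReactionNetwork.monomial xs r.1 * Real.exp (dt r.1 μ) * (dt r.2 μ - dt r.1 μ) := by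
    rw [dt_massAction]
    apply Finset.sum_congr rfl
    intro r _
    rw [hmz r.1]; ring
  have key0 : ∑ r ∈ N.reactions, κ r * ReactionNetwork.monomial xs r.1 * Real.exp (dt r.2 μ)
      = ∑ r ∈ N.reactions, κ r * ReactionNetwork.monomial xs r.1 * Real.exp (dt r.1 μ) :=
    hcb.transport N κ (fun y => Real.exp (dt y μ))
  set D : Cplx n × Cplx n → ℝ := fun r =>
    κ r * ReactionNetwork.monomial xs r.1 *
      (Real.exp (dt r.2 μ) - Real.exp (dt r.1 μ)
        - Real.exp (dt r.1 μ) * (dt r.2 μ - dt r.1 μ)) with hD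
  have hDnn : ∀ r ∈ N.reactions, 0 ≤ D r := by
    intro r hr
    rw [hD]
    have h1 := exp_ineq (dt r.1 μ) (dt r.2 μ)
    have h2 := hκ r hr
    have h3 := monomial_pos hxs r.1
    have : 0 ≤ Real.exp (dt r.2 μ) - Real.exp (dt r.1 μ)
        - Real.exp (dt r.1 μ) * (dt r.2 μ - dt r.1 μ) := by linarith
    positivity
  have hsum : ∑ r ∈ N.reactions, D r = - dt (N.massAction κ z) μ := by
    rw [hfd, hD]
    have : ∀ r ∈ N.reactions,
        κ r * ReactionNetwork.monomial xs r.1 *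
          (Real.exp (dt r.2 μ) - Real.exp (dt r.1 μ)
            - Real.exp (dt r.1 μ) * (dt r.2 μ - dt r.1 μ))
        = (κ r * ReactionNetwork.monomial xs r.1 * Real.exp (dt r.2 μ)
            - κ r * ReactionNetwork.monomial xs r.1 * Real.exp (dt r.1 μ))
          - κ r * ReactionNetwork.monomial xs r.1 * Real.exp (dt r.1 μ)
              * (dt r.2 μ - dt r.1 μ) := fun r _ => by ring
    rw [Finset.sum_congr rfl this, Finset.sum_sub_distrib, Finset.sum_sub_distrib, key0]
    ring
  constructor
  · have h1 : 0 ≤ ∑ r ∈ N.reactions, D r := Finset.sum_nonneg hDnn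
    linarith [hsum]
  · intro h0 r hr
    have hsz : ∑ r ∈ N.reactions, D r = 0 := by rw [hsum, h0]; ring
    have := (Finset.sum_eq_zero_iff_of_nonneg hDnn).1 hsz r hr
    rw [hD] at this
    have h2 := hκ r hr
    have h3 := monomial_pos hxs r.1
    have h4 : Real.exp (dt r.2 μ) - Real.exp (dt r.1 μ)
        - Real.exp (dt r.1 μ) * (dt r.2 μ - dt r.1 μ) = 0 := by
      rcases mul_eq_zero.1 this with h | h
      · exact absurd h (by positivity)
      · exact h
    have h5 : dt r.1 μ = dt r.2 μ := by
      by_contra hne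
      have := exp_ineq_strict hne
      linarith
    rw [dt_sub_right]
    rw [dt_comm r.1 μ, dt_comm r.2 μ] at h5
    linarith

end HJ

end DZT

namespace DZT

variable {n : ℕ}

open ReactionNetwork

lemma psi_lower (a b : ℝ) (ha : 0 < a) (hb : 0 < b) (s : ℝ) :
    b * (1 - Real.log (b / a)) ≤ a * Real.exp s - b * s := by
  set L := Real.log (b / a) with hL
  have hexp : Real.exp L = b / a := Real.exp_log (by positivity)
  have h1 : a * Real.exp s = b * Real.exp (s - L) := by
    have h0 : Real.exp s = Real.exp L * Real.exp (s - L) := by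
      rw [← Real.exp_add]; ring_nf
    rw [h0, hexp]; field_simp
  have h2 : (s - L) + 1 ≤ Real.exp (s - L) := Real.add_one_le_exp _
  have h3 : b * ((s - L) + 1) ≤ b * Real.exp (s - L) := by nlinarith
  nlinarith

lemma coercive_exp (a b M : ℝ) (ha : 0 < a) (hb : 0 < b) :
    ∃ R, 0 < R ∧ ∀ s : ℝ, R ≤ |s| → M < a * Real.exp s - b * s := by
  have h1 : Filter.Tendsto (fun s : ℝ => Real.exp s / s ^ 1) Filter.atTop Filter.atTop :=
    Real.tendsto_exp_div_pow_atTop 1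
  obtain ⟨R₁, hR₁⟩ := Filter.eventually_atTop.1
    ((h1.eventually_ge_atTop ((b + |M| + 1) / a)).and (Filter.eventually_ge_atTop 1))
  set R₂ : ℝ := (|M| + 1) / b with hR₂def
  set R : ℝ := max R₁ (max R₂ 1) + 1 with hRdef
  have hRpos : 0 < R := by
    have h := le_max_right R₂ 1
    have h' := le_max_right R₁ (max R₂ 1)
    rw [hRdef]; linarith
  refine ⟨R, hRpos, ?_⟩
  intro s hs
  rcases le_abs.1 hs with h | h
  · have hsR₁ : R₁ ≤ s := by
      have := le_max_left R₁ (max R₂ 1); linarith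
    obtain ⟨hdiv, hs1⟩ := hR₁ s hsR₁
    rw [pow_one] at hdiv
    have hspos : (0:ℝ) < s := by linarith
    have hmul : (b + |M| + 1) / a * s ≤ Real.exp s := (le_div_iff₀ hspos).1 hdiv
    have hmul2 : a * ((b + |M| + 1) / a * s) ≤ a * Real.exp s :=
      mul_le_mul_of_nonneg_left hmul ha.le
    have hcancel : a * ((b + |M| + 1) / a * s) = (b + |M| + 1) * s := by
      field_simp
    nlinarith [le_abs_self M, mul_le_mul_of_nonneg_left hs1 (by positivity : (0:ℝ) ≤ |M| + 1)]
  · have h1' := le_max_left R₂ 1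
    have h2' := le_max_right R₁ (max R₂ 1)
    have hsneg : s ≤ -R₂ := by linarith
    have hcancel : b * R₂ = |M| + 1 := by rw [hR₂def]; field_simp
    nlinarith [Real.exp_pos s, le_abs_self M, mul_le_mul_of_nonneg_left hsneg hb.le]

lemma exists_norm_coord [Nonempty (Fin n)] (v : Cplx n) : ∃ i, ‖v‖ = |v i| := by
  obtain ⟨i, _, hi⟩ := Finset.exists_mem_eq_sup (Finset.univ : Finset (Fin n))
    Finset.univ_nonempty (fun b => ‖v b‖₊)
  refine ⟨i, ?_⟩
  rw [Pi.norm_def, hi]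
  simp [Real.norm_eq_abs]

section birch

variable (N : ReactionNetwork n) (κ : Cplx n × Cplx n → ℝ)

/-- Existence of a complex-balanced state in each compatibility class. -/
lemma exists_CB_in_class (hκ : N.PosRates κ) (hN : N.WR0) (hRne : N.reactions.Nonempty)
    {x₀ : Cplx n} (hx₀ : x₀ ∈ pos) :
    ∃ zs : Cplx n, zs ∈ pos ∧ CBal N κ zs ∧ zs - x₀ ∈ N.stoichSubspace := by
  classical
  haveI hne : Nonempty (Fin n) := by
    by_contra h
    rw [not_nonempty_iff] at h
    obtain ⟨r, hr⟩ := hRne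
    exact N.no_loops r hr (funext fun i => (h.false i).elim)
  obtain ⟨xs, hxs, hcb⟩ := exists_CB N κ hκ hN
  set Sp : Submodule ℝ (Cplx n) := dtPerp (gens N) with hSp
  set G : Cplx n → ℝ := fun u => (∑ i, xs i * Real.exp (u i)) - ∑ i, u i * x₀ i with hG
  have hGdt : ∀ u : Cplx n, G u = (∑ i, xs i * Real.exp (u i)) - dt u x₀ := fun u => rfl
  have hGcont : Continuous G := by
    apply Continuous.sub
    · exact continuous_finset_sum _ fun i _ =>
        continuous_const.mul (Real.continuous_exp.comp
          (continuous_apply i : Continuous fun v : Cplx n => v i))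
    · exact continuous_finset_sum _ fun i _ =>
        ((continuous_apply i : Continuous fun v : Cplx n => v i)).mul continuous_const
  -- coercivity data
  set lb : Fin n → ℝ := fun i => x₀ i * (1 - Real.log (x₀ i / xs i)) with hlb
  have hlb_le : ∀ i s, lb i ≤ xs i * Real.exp s - x₀ i * s :=
    fun i s => psi_lower (xs i) (x₀ i) (hxs i) (hx₀ i) s
  have hcoer : ∀ i : Fin n, ∃ R, 0 < R ∧ ∀ s : ℝ, R ≤ |s| →
      G 0 - ∑ j ∈ Finset.univ.erase i, lb j < xs i * Real.exp s - x₀ i * s :=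
    fun i => coercive_exp (xs i) (x₀ i) _ (hxs i) (hx₀ i)
  choose Rf hRfpos hRf using hcoer
  set R : ℝ := Finset.univ.sup' Finset.univ_nonempty Rf with hR
  have hRpos : 0 < R := lt_of_lt_of_le (hRfpos (Classical.arbitrary (Fin n)))
    (Finset.le_sup' Rf (Finset.mem_univ _))
  set K : Set (Cplx n) := (Sp : Set (Cplx n)) ∩ Metric.closedBall 0 R with hK
  have hKcompact : IsCompact K := by
    apply IsCompact.inter_left (isCompact_closedBall 0 R)
    exact (Submodule.complete_of_finiteDimensional Sp).isClosed
  have hKne : K.Nonempty := ⟨0, Sp.zero_mem, by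
    rw [Metric.mem_closedBall, dist_self]; exact hRpos.le⟩
  obtain ⟨v, hvK, hvmin⟩ := hKcompact.exists_isMinOn hKne hGcont.continuousOn
  have hvSp : v ∈ Sp := hvK.1
  have hvnorm : ‖v‖ ≤ R := by
    have := hvK.2
    rwa [Metric.mem_closedBall, dist_zero_right] at this
  have hGsum : ∀ u : Cplx n, G u = ∑ i, (xs i * Real.exp (u i) - x₀ i * u i) := by
    intro u
    rw [hG]
    beta_reduce
    rw [← Finset.sum_sub_distrib]
    exact Finset.sum_congr rfl fun i _ => by ring
  have hG0le : G v ≤ G 0 := hvmin ⟨Sp.zero_mem, by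
    rw [Metric.mem_closedBall, dist_self]; exact hRpos.le⟩
  -- the minimizer is interior
  have hvlt : ‖v‖ < R := by
    rcases lt_or_eq_of_le hvnorm with h | h
    · exact h
    · exfalso
      obtain ⟨i, hi⟩ := exists_norm_coord v
      have hiR : Rf i ≤ |v i| := by
        rw [← hi, h]
        exact Finset.le_sup' Rf (Finset.mem_univ i)
      have hgt := hRf i (v i) hiR
      have hsplit : G v = (xs i * Real.exp (v i) - x₀ i * v i)
          + ∑ j ∈ Finset.univ.erase i, (xs j * Real.exp (v j) - x₀ j * v j) := by
        rw [hGsum, ← Finset.add_sum_erase _ _ (Finset.mem_univ i)]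
      have hrest : ∑ j ∈ Finset.univ.erase i, lb j
          ≤ ∑ j ∈ Finset.univ.erase i, (xs j * Real.exp (v j) - x₀ j * v j) :=
        Finset.sum_le_sum fun j _ => hlb_le j (v j)
      linarith [hsplit, hgt, hrest, hG0le]
  -- first-order conditions
  set zs : Cplx n := fun i => xs i * Real.exp (v i) with hzs
  have hgrad : ∀ w, w ∈ Sp → dt w (zs - x₀) = 0 := by
    intro w hw
    set ρ : ℝ → ℝ := fun t => G (v + t • w) with hρ
    have hρeq : ρ = fun t => (∑ i, xs i * Real.exp (v i + t * w i))
        - ((∑ i, v i * x₀ i) + t * ∑ i, w i * x₀ i) := by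
      funext t
      rw [hρ]
      beta_reduce
      rw [hG]
      beta_reduce
      have hA : (∑ i, xs i * Real.exp ((v + t • w) i)) = ∑ i, xs i * Real.exp (v i + t * w i) :=
        Finset.sum_congr rfl fun i _ => rfl
      have hB : (∑ i, (v + t • w) i * x₀ i) = (∑ i, v i * x₀ i) + t * ∑ i, w i * x₀ i := by
        have h1 : ∀ i : Fin n, (v + t • w) i * x₀ i = v i * x₀ i + t * (w i * x₀ i) := by
          intro i
          have : (v + t • w) i = v i + t * w i := rfl
          rw [this]; ring
        rw [show (∑ i, (v + t • w) i * x₀ i) = ∑ i, (v i * x₀ i + t * (w i * x₀ i)) from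
          Finset.sum_congr rfl fun i _ => h1 i, Finset.sum_add_distrib, ← Finset.mul_sum]
      rw [hA, hB]
    have hpart1 : HasDerivAt (fun t : ℝ => ∑ i, xs i * Real.exp (v i + t * w i))
        (∑ i, xs i * (Real.exp (v i + 0 * w i) * w i)) 0 := by
      apply HasDerivAt.fun_sum
      intro i _
      have base : HasDerivAt (fun t : ℝ => v i + t * w i) (w i) 0 := by
        simpa using (hasDerivAt_mul_const (w i)).const_add (v i)
      exact (base.exp).const_mul (xs i)
    have hpart2 : HasDerivAt (fun t : ℝ => (∑ i, v i * x₀ i) + t * ∑ i, w i * x₀ i)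
        (∑ i, w i * x₀ i) 0 := by
      simpa using (hasDerivAt_mul_const (∑ i, w i * x₀ i)).const_add (∑ i, v i * x₀ i)
    have hderiv : HasDerivAt ρ
        ((∑ i, xs i * (Real.exp (v i + 0 * w i) * w i)) - ∑ i, w i * x₀ i) 0 := by
      rw [hρeq]
      exact hpart1.sub hpart2
    have hlocmin : IsLocalMin ρ 0 := by
      set δt : ℝ := (R - ‖v‖) / (‖w‖ + 1) with hδt
      have hδtpos : 0 < δt := by
        apply div_pos (by linarith [hvlt]) (by positivity)
      have hev : ∀ᶠ t : ℝ in nhds 0, |t| < δt := by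
        have := eventually_abs_sub_lt (0:ℝ) hδtpos
        simpa using this
      apply Filter.Eventually.mono hev
      intro t ht
      have hmem : v + t • w ∈ K := by
        constructor
        · exact Sp.add_mem hvSp (Sp.smul_mem t hw)
        · rw [Metric.mem_closedBall, dist_zero_right]
          have h1 : ‖v + t • w‖ ≤ ‖v‖ + ‖t • w‖ := norm_add_le _ _
          have h2 : ‖t • w‖ = |t| * ‖w‖ := by rw [norm_smul, Real.norm_eq_abs]
          have h3 : |t| * ‖w‖ ≤ |t| * (‖w‖ + 1) := by
            apply mul_le_mul_of_nonneg_left (by linarith) (abs_nonneg t)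
          have h4 : |t| * (‖w‖ + 1) < δt * (‖w‖ + 1) := by
            apply mul_lt_mul_of_pos_right ht (by positivity)
          have h5 : δt * (‖w‖ + 1) = R - ‖v‖ := by
            rw [hδt]; field_simp
          linarith
      have : ρ 0 = G v := by
        rw [hρ]; beta_reduce; rw [zero_smul, add_zero]
      rw [this]
      exact hvmin hmem
    have hzero := hlocmin.hasDerivAt_eq_zero hderiv
    have hconv : ∑ i, xs i * (Real.exp (v i + 0 * w i) * w i) = dt w zs := by
      unfold dt
      apply Finset.sum_congr rfl
      intro i _
      rw [hzs]
      beta_reduce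
      rw [zero_mul, add_zero]
      ring
    rw [hconv] at hzero
    rw [dt_sub_right]
    have : dt w x₀ = ∑ i, w i * x₀ i := rfl
    rw [this]
    linarith [hzero]
  have hzs_pos_cb := CBal.scale N κ hxs hcb (v := v) ((mem_dtPerp_gens N).1 hvSp)
  refine ⟨zs, hzs_pos_cb.1, hzs_pos_cb.2, ?_⟩
  rw [stoich_eq_span, mem_span_iff_dt]
  intro w hw
  exact hgrad w ((mem_dtPerp (G := gens N)).2 hw)

/-- Two positive states whose log-difference is stoichiometrically orthogonal and whose
difference lies in the stoichiometric subspace are equal. -/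
lemma pos_eq_of_perp {z₁ z₂ : Cplx n} (h₁ : z₁ ∈ pos) (h₂ : z₂ ∈ pos)
    (hperp : ∀ r ∈ N.reactions, dt (lv z₁ - lv z₂) (r.2 - r.1) = 0)
    (hdiff : z₁ - z₂ ∈ N.stoichSubspace) : z₁ = z₂ := by
  set μ : Cplx n := lv z₁ - lv z₂ with hμ
  have hspan : ∀ s ∈ Submodule.span ℝ (gens N), dt μ s = 0 := by
    intro s hs
    induction hs using Submodule.span_induction with
    | mem x hx => obtain ⟨r, hr, rfl⟩ := hx; exact hperp r hr
    | zero => simp [dt]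
    | add x y _ _ hx hy => rw [dt_add_right, hx, hy]; ring
    | smul c x _ hx => rw [dt_smul_right, hx]; ring
  have hzero : dt μ (z₁ - z₂) = 0 := hspan _ (by rwa [← stoich_eq_span])
  have hterms : ∀ i ∈ (Finset.univ : Finset (Fin n)),
      0 ≤ (Real.log (z₁ i) - Real.log (z₂ i)) * (z₁ i - z₂ i) :=
    fun i _ => log_diff_mul_diff_nonneg (h₁ i) (h₂ i)
  have hsum : ∑ i, (Real.log (z₁ i) - Real.log (z₂ i)) * (z₁ i - z₂ i) = 0 := by
    rw [← hzero]
    unfold dt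
    apply Finset.sum_congr rfl
    intro i _
    have e1 : μ i = Real.log (z₁ i) - Real.log (z₂ i) := rfl
    have e2 : (z₁ - z₂) i = z₁ i - z₂ i := rfl
    rw [e1, e2]
  have := (Finset.sum_eq_zero_iff_of_nonneg hterms).1 hsum
  funext i
  exact eq_of_log_diff_mul_diff_eq_zero (h₁ i) (h₂ i) (this i (Finset.mem_univ i))

end birch

end DZT

namespace DZT

variable {n : ℕ}

open ReactionNetwork

section lyap

variable (N : ReactionNetwork n) (κ : Cplx n × Cplx n → ℝ)

/-- Trajectories stay in their stoichiometric compatibility class. -/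
lemma traj_in_class {x : ℝ → Cplx n}
    (hx' : ∀ t ∈ Set.Ici (0:ℝ), HasDerivWithinAt x (N.massAction κ (x t)) (Set.Ici 0) t)
    {t : ℝ} (ht : t ∈ Set.Ici (0:ℝ)) : x t - x 0 ∈ N.stoichSubspace := by
  rw [stoich_eq_span, mem_span_iff_dt]
  intro w hw
  have hw' : ∀ r ∈ N.reactions, dt w (r.2 - r.1) = 0 := fun r hr => hw _ ⟨r, hr, rfl⟩
  have hq : ∀ s ∈ Set.Ici (0:ℝ),
      HasDerivWithinAt (fun s => dt w (x s)) ((fun _ => (0:ℝ)) s) (Set.Ici 0) s := by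
    intro s hs
    have hcoord : ∀ i : Fin n, HasDerivWithinAt (fun s => x s i)
        (N.massAction κ (x s) i) (Set.Ici 0) s := fun i =>
      (ContinuousLinearMap.proj (R := ℝ) (φ := fun _ : Fin n => ℝ) i).hasFDerivAt.comp_hasDerivWithinAt s (hx' s hs)
    have hsum : HasDerivWithinAt (fun s => ∑ i, w i * x s i)
        (∑ i, w i * N.massAction κ (x s) i) (Set.Ici 0) s := by
      apply HasDerivWithinAt.fun_sum
      intro i _
      exact (hcoord i).const_mul (w i)
    have hzero : (∑ i, w i * N.massAction κ (x s) i) = 0 :=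
      dt_massAction_eq_zero_of_perp hw' (x s)
    rw [hzero] at hsum
    exact hsum
  have hconst := Convex.norm_image_sub_le_of_norm_hasDerivWithin_le (C := 0) hq
    (fun s _ => by simp) (convex_Ici 0) Set.self_mem_Ici ht
  have h0 : dt w (x t) - dt w (x 0) = 0 := by
    have := norm_le_zero_iff.1 (by simpa using hconst)
    exact sub_eq_zero.2 (by
      have h := sub_eq_zero.1 this
      exact h)
  rw [dt_sub_right]
  exact h0

/-- The Lyapunov function of an equilibrium. -/
def lyapV (zs : Cplx n) : Cplx n → ℝ :=
  fun u => ∑ i, (u i * (Real.log (u i) - Real.log (zs i)) - u i + zs i)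

lemma lyap_term_nonneg {a b : ℝ} (ha : 0 < a) (hb : 0 < b) :
    0 ≤ a * (Real.log a - Real.log b) - a + b := by
  have key : Real.exp (Real.log b - Real.log a) * a = b := by
    rw [Real.exp_sub, Real.exp_log hb, Real.exp_log ha]
    field_simp
  have h := Real.add_one_le_exp (Real.log b - Real.log a)
  nlinarith [mul_le_mul_of_nonneg_right h ha.le]

lemma lyap_term_pos {a b : ℝ} (ha : 0 < a) (hb : 0 < b) (hne : a ≠ b) :
    0 < a * (Real.log a - Real.log b) - a + b := by
  have key : Real.exp (Real.log b - Real.log a) * a = b := by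
    rw [Real.exp_sub, Real.exp_log hb, Real.exp_log ha]
    field_simp
  have hlne : Real.log b - Real.log a ≠ 0 := by
    intro hc
    have : Real.log b = Real.log a := by linarith
    exact hne (Real.log_injOn_pos (Set.mem_Ioi.2 ha) (Set.mem_Ioi.2 hb) (by linarith))
  have h := Real.add_one_lt_exp hlne
  nlinarith [mul_lt_mul_of_pos_right h ha]

lemma lyapV_nonneg {zs u : Cplx n} (hzs : zs ∈ pos) (hu : u ∈ pos) : 0 ≤ lyapV zs u :=
  Finset.sum_nonneg fun i _ => lyap_term_nonneg (hu i) (hzs i)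

lemma lyapV_self (zs : Cplx n) : lyapV zs zs = 0 := by
  unfold lyapV
  apply Finset.sum_eq_zero
  intro i _
  simp

lemma lyapV_pos {zs u : Cplx n} (hzs : zs ∈ pos) (hu : u ∈ pos) (hne : u ≠ zs) :
    0 < lyapV zs u := by
  obtain ⟨i, hi⟩ : ∃ i, u i ≠ zs i := by
    by_contra hc
    push_neg at hc
    exact hne (funext hc)
  have h1 : ∑ _i : Fin n, (0:ℝ) < ∑ i, (u i * (Real.log (u i) - Real.log (zs i)) - u i + zs i) :=
    Finset.sum_lt_sum (fun j _ => lyap_term_nonneg (hu j) (hzs j))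
      ⟨i, Finset.mem_univ i, lyap_term_pos (hu i) (hzs i) hi⟩
  simpa [lyapV] using h1

lemma lyapV_continuousAt {zs u : Cplx n} (hzs : zs ∈ pos) (hu : u ∈ pos) :
    ContinuousAt (lyapV zs) u := by
  unfold lyapV
  apply tendsto_finset_sum
  intro i _
  have hei : ContinuousAt (fun v : Cplx n => v i) u := (continuous_apply i).continuousAt
  have hlog : ContinuousAt (fun v : Cplx n => Real.log (v i)) u :=
    ContinuousAt.comp (g := Real.log) (f := fun v : Cplx n => v i) (x := u)
      (Real.continuousAt_log (ne_of_gt (hu i))) hei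
  exact ((hei.mul (hlog.sub continuousAt_const)).sub hei).add continuousAt_const

/-- Derivative of the Lyapunov function along a trajectory. -/
lemma lyap_deriv {zs : Cplx n} (hzs : zs ∈ pos) {x : ℝ → Cplx n} {t : ℝ}
    (hpos : x t ∈ pos) (hx' : HasDerivWithinAt x (N.massAction κ (x t)) (Set.Ici 0) t) :
    HasDerivWithinAt (fun s => lyapV zs (x s))
      (dt (N.massAction κ (x t)) (lv (x t) - lv zs)) (Set.Ici 0) t := by
  have hF : HasFDerivAt (lyapV zs)
      (∑ i, (Real.log (x t i) - Real.log (zs i)) •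
        ContinuousLinearMap.proj (R := ℝ) (φ := fun _ : Fin n => ℝ) i) (x t) := by
    apply HasFDerivAt.fun_sum
    intro i _
    have hne := ne_of_gt (hpos i)
    have hφ : HasDerivAt (fun s : ℝ => s * (Real.log s - Real.log (zs i)) - s + zs i)
        (Real.log (x t i) - Real.log (zs i)) (x t i) := by
      have h1 : HasDerivAt (fun s : ℝ => s * (Real.log s - Real.log (zs i)))
          (1 * (Real.log (x t i) - Real.log (zs i)) + x t i * (x t i)⁻¹) (x t i) :=
        (hasDerivAt_id (x t i)).mul ((Real.hasDerivAt_log hne).sub_const (Real.log (zs i)))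
      have h2 := (h1.sub (hasDerivAt_id (x t i))).add_const (zs i)
      have heq : 1 * (Real.log (x t i) - Real.log (zs i)) + x t i * (x t i)⁻¹ - 1
          = Real.log (x t i) - Real.log (zs i) := by
        field_simp
        ring
      rw [← heq]
      exact h2
    exact hφ.comp_hasFDerivAt (x t)
      ((ContinuousLinearMap.proj (R := ℝ) (φ := fun _ : Fin n => ℝ) i).hasFDerivAt)
  have hcomp := hF.comp_hasDerivWithinAt t hx'
  have hval : (∑ i, (Real.log (x t i) - Real.log (zs i)) •
        ContinuousLinearMap.proj (R := ℝ) (φ := fun _ : Fin n => ℝ) i) (N.massAction κ (x t))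
      = dt (N.massAction κ (x t)) (lv (x t) - lv zs) := by
    rw [ContinuousLinearMap.sum_apply, dt_comm]
    unfold dt
    apply Finset.sum_congr rfl
    intro i _
    rw [ContinuousLinearMap.smul_apply, ContinuousLinearMap.proj_apply]
    have h1 : (lv (x t) - lv zs) i = Real.log (x t i) - Real.log (zs i) := rfl
    rw [h1]
    simp [smul_eq_mul]
  rw [hval] at hcomp
  exact hcomp

/-- Antitonicity from a nonpositive derivative on `Ici 0`. -/
lemma antitone_of_hasDerivWithin {g g' : ℝ → ℝ}
    (hg : ∀ t ∈ Set.Ici (0:ℝ), HasDerivWithinAt g (g' t) (Set.Ici 0) t)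
    (hg' : ∀ t ∈ Set.Ici (0:ℝ), g' t ≤ 0) : AntitoneOn g (Set.Ici 0) := by
  apply antitoneOn_of_deriv_nonpos (convex_Ici 0)
  · exact fun t ht => (hg t ht).continuousWithinAt
  · rw [interior_Ici]
    intro t ht
    exact (((hg t (Set.mem_Ici.2 (le_of_lt ht))).hasDerivAt (Ici_mem_nhds ht)).differentiableAt).differentiableWithinAt
  · rw [interior_Ici]
    intro t ht
    rw [((hg t (Set.mem_Ici.2 (le_of_lt ht))).hasDerivAt (Ici_mem_nhds ht)).deriv]
    exact hg' t (Set.mem_Ici.2 (le_of_lt ht))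

/-- Continuity of the mass-action vector field at positive points. -/
lemma massAction_continuousAt {u : Cplx n} (hu : u ∈ pos) :
    ContinuousAt (N.massAction κ) u := by
  have hmono : ∀ y : Cplx n, ContinuousAt (fun v => ReactionNetwork.monomial v y) u := by
    intro y
    unfold ReactionNetwork.monomial
    apply tendsto_finset_prod
    intro i _
    exact ContinuousAt.comp (g := fun s : ℝ => s ^ (y i)) (f := fun v : Cplx n => v i) (x := u)
      (Real.continuousAt_rpow_const (u i) (y i) (Or.inl (ne_of_gt (hu i))))
      ((continuous_apply i).continuousAt)
  unfold ReactionNetwork.massAction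
  apply tendsto_finset_sum
  intro r _
  apply Filter.Tendsto.smul
  · exact (continuousAt_const.mul (hmono r.1))
  · exact continuousAt_const

end lyap

end DZT

open DZT ReactionNetwork

/-- **Deficiency Zero Theorem.** If `N` is a WR₀ network and `κ` any
choice of positive rate constants, then for every positive `x₀` the mass-action system
`(N,κ)` has exactly one positive equilibrium `xs` in the stoichiometric compatibility
class of `x₀`, and this equilibrium is asymptotically stable relative to its
compatibility class. -/
theorem deficiency_zero_theorem {n : ℕ} (N : ReactionNetwork n)
    (κ : Cplx n × Cplx n → ℝ) (hκ : N.PosRates κ) (hN : N.WR0)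
    (x₀ : Cplx n) (hx₀ : ∀ i, 0 < x₀ i) :
    ∃ xs : Cplx n,
      -- xs is an equilibrium in the compatibility class of x₀ …
      (∀ i, 0 < xs i) ∧ xs - x₀ ∈ N.stoichSubspace ∧ N.massAction κ xs = 0 ∧
      -- … and it is the only one
      (∀ z : Cplx n, (∀ i, 0 < z i) → z - x₀ ∈ N.stoichSubspace →
        N.massAction κ z = 0 → z = xs) ∧
      -- Lyapunov stability relative to the compatibility class
      (∀ ε > (0:ℝ), ∃ δ > (0:ℝ), ∀ x : ℝ → Cplx n,
        (∀ t ∈ Set.Ici (0:ℝ), ∀ i, 0 < x t i) →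
        (∀ t ∈ Set.Ici (0:ℝ),
          HasDerivWithinAt x (N.massAction κ (x t)) (Set.Ici 0) t) →
        x 0 - xs ∈ N.stoichSubspace → ‖x 0 - xs‖ < δ →
        ∀ t ∈ Set.Ici (0:ℝ), ‖x t - xs‖ < ε) ∧
      -- local attractivity relative to the compatibility class
      (∃ δ₀ > (0:ℝ), ∀ x : ℝ → Cplx n,
        (∀ t ∈ Set.Ici (0:ℝ), ∀ i, 0 < x t i) →
        (∀ t ∈ Set.Ici (0:ℝ),
          HasDerivWithinAt x (N.massAction κ (x t)) (Set.Ici 0) t) →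
        x 0 - xs ∈ N.stoichSubspace → ‖x 0 - xs‖ < δ₀ →
        Filter.Tendsto x Filter.atTop (nhds xs)) := by
  classical
  by_cases hRne : N.reactions.Nonempty
  case neg =>
    -- trivial case: no reactions
    have hRempty : N.reactions = ∅ := Finset.not_nonempty_iff_eq_empty.1 hRne
    have hf0 : ∀ z : Cplx n, N.massAction κ z = 0 := by
      intro z
      unfold ReactionNetwork.massAction
      rw [hRempty, Finset.sum_empty]
    have hSbot : N.stoichSubspace = ⊥ := by
      rw [stoich_eq_span]
      have : gens N = ∅ := by
        ext d
        simp only [gens, Set.mem_setOf_eq, Set.mem_empty_iff_false, iff_false]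
        rintro ⟨r, hr, _⟩
        rw [hRempty] at hr
        exact absurd hr (Finset.notMem_empty r)
      rw [this, Submodule.span_empty]
    have hconstx : ∀ x : ℝ → Cplx n,
        (∀ t ∈ Set.Ici (0:ℝ), HasDerivWithinAt x (N.massAction κ (x t)) (Set.Ici 0) t) →
        ∀ t ∈ Set.Ici (0:ℝ), x t = x 0 := by
      intro x hx' t ht
      have hb := Convex.norm_image_sub_le_of_norm_hasDerivWithin_le (C := 0)
        (f' := fun s => N.massAction κ (x s)) hx'
        (fun s _ => by simp [hf0]) (convex_Ici 0) Set.self_mem_Ici ht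
      have : ‖x t - x 0‖ ≤ 0 := by simpa using hb
      have := norm_le_zero_iff.1 this
      exact sub_eq_zero.1 this
    refine ⟨x₀, hx₀, by rw [hSbot]; simp, hf0 x₀, ?_, ?_, ?_⟩
    · intro z _ hz _
      rw [hSbot, Submodule.mem_bot] at hz
      exact sub_eq_zero.1 hz
    · intro ε hε
      refine ⟨ε, hε, ?_⟩
      intro x _ hx' _ hnorm t ht
      rw [hconstx x hx' t ht]
      exact hnorm
    · refine ⟨1, one_pos, ?_⟩
      intro x _ hx' hcl _
      rw [hSbot, Submodule.mem_bot] at hcl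
      have hx0 : x 0 = x₀ := sub_eq_zero.1 hcl
      have hev : ∀ᶠ t in Filter.atTop, x₀ = x t := by
        filter_upwards [Filter.eventually_ge_atTop (0:ℝ)] with t ht
        rw [hconstx x hx' t ht, hx0]
      exact Filter.Tendsto.congr' hev tendsto_const_nhds
  case pos =>
  haveI hne : Nonempty (Fin n) := by
    by_contra h
    rw [not_nonempty_iff] at h
    obtain ⟨r, hr⟩ := hRne
    exact N.no_loops r hr (funext fun i => (h.false i).elim)
  have hx₀p : x₀ ∈ DZT.pos := hx₀
  obtain ⟨zs, hzs, hcb, hclass⟩ := exists_CB_in_class N κ hκ hN hRne hx₀p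
  have hfzs : N.massAction κ zs = 0 := hcb.massAction_eq_zero N κ
  -- uniqueness relative to zs
  have huniq : ∀ z : Cplx n, z ∈ DZT.pos → z - zs ∈ N.stoichSubspace →
      N.massAction κ z = 0 → z = zs := by
    intro z hz hdz hfz
    apply pos_eq_of_perp N hz hzs ?_ hdz
    have h0 : dt (N.massAction κ z) (lv z - lv zs) = 0 := by
      rw [hfz]
      simp [dt]
    exact (hj_ineq N κ hκ hzs hcb hz).2 h0
  -- the minimum coordinate of zs
  set m0 : ℝ := Finset.univ.inf' Finset.univ_nonempty (fun i => zs i) with hm0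
  have hm0pos : 0 < m0 := by
    rw [hm0, Finset.lt_inf'_iff]
    exact fun i _ => hzs i
  have hm0le : ∀ i, m0 ≤ zs i := fun i => Finset.inf'_le _ (Finset.mem_univ i)
  have hballpos : ∀ y : Cplx n, ‖y - zs‖ ≤ m0 / 2 → y ∈ DZT.pos := by
    intro y hy i
    have h1 : |y i - zs i| ≤ ‖y - zs‖ := by
      have := norm_le_pi_norm (y - zs) i
      rwa [Real.norm_eq_abs] at this
    have h2 := abs_le.1 (le_trans h1 hy)
    have := hm0le i
    linarith [h2.1]
  -- STABILITY
  have hstab : ∀ ε > (0:ℝ), ∃ δ > (0:ℝ), ∀ x : ℝ → Cplx n,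
      (∀ t ∈ Set.Ici (0:ℝ), ∀ i, 0 < x t i) →
      (∀ t ∈ Set.Ici (0:ℝ), HasDerivWithinAt x (N.massAction κ (x t)) (Set.Ici 0) t) →
      x 0 - zs ∈ N.stoichSubspace → ‖x 0 - zs‖ < δ →
      ∀ t ∈ Set.Ici (0:ℝ), ‖x t - zs‖ < ε := by
    intro ε hε
    set ε' : ℝ := min ε (m0 / 2) with hε'def
    have hε'pos : 0 < ε' := lt_min hε (by linarith)
    have hε'le : ε' ≤ m0 / 2 := min_le_right _ _
    have hsphere_pos : ∀ y ∈ Metric.sphere zs ε', y ∈ DZT.pos := by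
      intro y hy
      apply hballpos
      rw [Metric.mem_sphere] at hy
      rw [← dist_eq_norm]
      linarith [hy.le]
    have hsne : (Metric.sphere zs ε').Nonempty :=
      NormedSpace.sphere_nonempty.2 hε'pos.le
    obtain ⟨ymin, hymem, hymin⟩ := (isCompact_sphere zs ε').exists_isMinOn hsne
      (fun y hy => (lyapV_continuousAt hzs (hsphere_pos y hy)).continuousWithinAt)
    set m : ℝ := lyapV zs ymin with hm
    have hmpos : 0 < m := by
      apply lyapV_pos hzs (hsphere_pos ymin hymem)
      intro hc
      rw [Metric.mem_sphere, hc, dist_self] at hymem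
      exact absurd hymem (ne_of_lt hε'pos)
    have hev : ∀ᶠ y in nhds zs, lyapV zs y < m := by
      have hcont := lyapV_continuousAt hzs hzs
      have h0 : lyapV zs zs = 0 := lyapV_self zs
      exact hcont.eventually_lt_const (by rw [h0]; exact hmpos)
    obtain ⟨δ1, hδ1pos, hδ1⟩ := Metric.eventually_nhds_iff.1 hev
    refine ⟨min δ1 ε', lt_min hδ1pos hε'pos, ?_⟩
    intro x hpos hx' _ hnorm
    set W : ℝ → ℝ := fun t => lyapV zs (x t) with hW
    have hWanti : AntitoneOn W (Set.Ici 0) :=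
      antitone_of_hasDerivWithin
        (fun t ht => lyap_deriv N κ hzs (hpos t ht) (hx' t ht))
        (fun t ht => (hj_ineq N κ hκ hzs hcb (hpos t ht)).1)
    have hW0 : W 0 < m := by
      apply hδ1
      rw [dist_eq_norm]
      exact lt_of_lt_of_le hnorm (min_le_left _ _)
    intro t ht
    by_contra hcon
    push_neg at hcon
    have hcon' : ε' ≤ ‖x t - zs‖ := le_trans (min_le_left _ _) hcon
    have hxc : ContinuousOn x (Set.Ici 0) := fun s hs => (hx' s hs).continuousWithinAt
    have hdc : ContinuousOn (fun s => ‖x s - zs‖) (Set.Icc 0 t) :=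
      ((hxc.mono (Set.Icc_subset_Ici_self)).sub continuousOn_const).norm
    have hsub : Set.Icc (‖x 0 - zs‖) (‖x t - zs‖) ⊆ (fun s => ‖x s - zs‖) '' Set.Icc 0 t :=
      intermediate_value_Icc ht hdc
    have hmem : ε' ∈ Set.Icc (‖x 0 - zs‖) (‖x t - zs‖) := by
      constructor
      · have : ‖x 0 - zs‖ < ε' := lt_of_lt_of_le hnorm (min_le_right _ _)
        linarith
      · exact hcon'
    obtain ⟨t₂, ht₂mem, ht₂⟩ := hsub hmem
    have ht₂Ici : t₂ ∈ Set.Ici (0:ℝ) := ht₂mem.1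
    have hsph : x t₂ ∈ Metric.sphere zs ε' := by
      rw [mem_sphere_iff_norm]
      exact ht₂
    have h1 : m ≤ W t₂ := hymin hsph
    have h2 : W t₂ ≤ W 0 := hWanti Set.self_mem_Ici ht₂Ici ht₂mem.1
    linarith
  refine ⟨zs, hzs, hclass, hfzs, ?_, hstab, ?_⟩
  · -- uniqueness in the class of x₀
    intro z hz hzx hfz
    apply huniq z hz ?_ hfz
    have := Submodule.sub_mem N.stoichSubspace hzx hclass
    rwa [sub_sub_sub_cancel_right] at this
  · -- ATTRACTIVITY
    set ε₁ : ℝ := m0 / 2 with hε₁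
    obtain ⟨δ₀, hδ₀pos, hδ₀⟩ := hstab ε₁ (by rw [hε₁]; exact half_pos hm0pos)
    refine ⟨δ₀, hδ₀pos, ?_⟩
    intro x hpos hx' hcl hnorm
    have htraj : ∀ t ∈ Set.Ici (0:ℝ), ‖x t - zs‖ < ε₁ := hδ₀ x hpos hx' hcl hnorm
    have htrajS : ∀ t ∈ Set.Ici (0:ℝ), x t - zs ∈ N.stoichSubspace := by
      intro t ht
      have h1 := traj_in_class N κ hx' ht
      have := Submodule.add_mem N.stoichSubspace h1 hcl
      rwa [sub_add_sub_cancel] at this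
    set W : ℝ → ℝ := fun t => lyapV zs (x t) with hW
    have hWanti : AntitoneOn W (Set.Ici 0) :=
      antitone_of_hasDerivWithin
        (fun t ht => lyap_deriv N κ hzs (hpos t ht) (hx' t ht))
        (fun t ht => (hj_ineq N κ hκ hzs hcb (hpos t ht)).1)
    have hWnn : ∀ t ∈ Set.Ici (0:ℝ), 0 ≤ W t := fun t ht => lyapV_nonneg hzs (hpos t ht)
    set c : ℝ := sInf (W '' Set.Ici 0) with hc
    have hbdd : BddBelow (W '' Set.Ici 0) := ⟨0, by rintro _ ⟨t, ht, rfl⟩; exact hWnn t ht⟩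
    have hWne : (W '' Set.Ici 0).Nonempty := ⟨W 0, 0, Set.self_mem_Ici, rfl⟩
    have hcge : ∀ t ∈ Set.Ici (0:ℝ), c ≤ W t := fun t ht => csInf_le hbdd ⟨t, ht, rfl⟩
    have hc0 : 0 ≤ c := le_csInf hWne (by rintro _ ⟨t, ht, rfl⟩; exact hWnn t ht)
    -- c must be 0
    have hceq : c = 0 := by
      by_contra hcne
      have hcpos : 0 < c := lt_of_le_of_ne hc0 (Ne.symm hcne)
      set Kc : Set (Cplx n) := (Metric.closedBall zs ε₁ ∩ (lyapV zs) ⁻¹' (Set.Ici c))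
        ∩ {y | y - zs ∈ N.stoichSubspace} with hKc
      have hKc_pos : ∀ y ∈ Kc, y ∈ DZT.pos := by
        rintro y ⟨⟨hy1, _⟩, _⟩
        apply hballpos
        rw [Metric.mem_closedBall, dist_eq_norm] at hy1
        exact hy1
      have hKc_closed : IsClosed Kc := by
        apply IsClosed.inter
        · apply ContinuousOn.preimage_isClosed_of_isClosed
          · intro y hy
            have : y ∈ DZT.pos := by
              apply hballpos
              rw [Metric.mem_closedBall, dist_eq_norm] at hy
              exact hy
            exact (lyapV_continuousAt hzs this).continuousWithinAt
          · exact Metric.isClosed_closedBall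
          · exact isClosed_Ici
        · have : {y : Cplx n | y - zs ∈ N.stoichSubspace}
              = (fun y => y - zs) ⁻¹' (N.stoichSubspace : Set (Cplx n)) := rfl
          rw [this]
          exact IsClosed.preimage (continuous_id.sub continuous_const)
            (Submodule.complete_of_finiteDimensional N.stoichSubspace).isClosed
      have hKc_cpt : IsCompact Kc := IsCompact.of_isClosed_subset
        (isCompact_closedBall zs ε₁) hKc_closed
        (fun y hy => hy.1.1)
      have hxKc : ∀ t ∈ Set.Ici (0:ℝ), x t ∈ Kc := by
        intro t ht
        refine ⟨⟨?_, ?_⟩, htrajS t ht⟩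
        · rw [Metric.mem_closedBall, dist_eq_norm]
          exact (htraj t ht).le
        · exact hcge t ht
      have hKc_ne : Kc.Nonempty := ⟨x 0, hxKc 0 Set.self_mem_Ici⟩
      set gfun : Cplx n → ℝ := fun y => dt (N.massAction κ y) (lv y - lv zs) with hgfun
      have hgcont : ContinuousOn gfun Kc := by
        intro y hy
        apply ContinuousAt.continuousWithinAt
        have hyp := hKc_pos y hy
        rw [hgfun]
        have : ContinuousAt (fun y => ∑ i, N.massAction κ y i * (Real.log (y i) - Real.log (zs i))) y := by
          apply tendsto_finset_sum
          intro i _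
          apply ContinuousAt.mul
          · exact ContinuousAt.comp (g := fun v : Cplx n => v i)
              (f := N.massAction κ) (x := y)
              ((continuous_apply i).continuousAt) (massAction_continuousAt N κ hyp)
          · apply ContinuousAt.sub
            · exact ContinuousAt.comp (g := Real.log) (f := fun v : Cplx n => v i) (x := y)
                (Real.continuousAt_log (ne_of_gt (hyp i))) ((continuous_apply i).continuousAt)
            · exact continuousAt_const
        exact this
      have hgneg : ∀ y ∈ Kc, gfun y < 0 := by
        intro y hy
        have hyp := hKc_pos y hy
        have h1 := (hj_ineq N κ hκ hzs hcb hyp).1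
        rcases lt_or_eq_of_le h1 with h | h
        · exact h
        · exfalso
          have hperp := (hj_ineq N κ hκ hzs hcb hyp).2 h
          have := pos_eq_of_perp N hyp hzs hperp hy.2
          have hVy : lyapV zs y = 0 := by rw [this]; exact lyapV_self zs
          have := hy.1.2
          rw [Set.mem_preimage, Set.mem_Ici, hVy] at this
          linarith
      obtain ⟨ym, hym, hymax⟩ := hKc_cpt.exists_isMaxOn hKc_ne hgcont
      set a : ℝ := -gfun ym with ha
      have hapos : 0 < a := by rw [ha]; linarith [hgneg ym hym]
      have hlin : AntitoneOn (fun t => W t + a * t) (Set.Ici 0) := by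
        apply antitone_of_hasDerivWithin (g' := fun t => gfun (x t) + a)
        · intro t ht
          apply HasDerivWithinAt.add
          · exact lyap_deriv N κ hzs (hpos t ht) (hx' t ht)
          · simpa using ((hasDerivAt_id t).const_mul a).hasDerivWithinAt
        · intro t ht
          have := hymax (hxKc t ht)
          rw [ha]
          simp only [Set.mem_setOf_eq] at this
          linarith [this]
      have hW0nn : 0 ≤ W 0 := hWnn 0 Set.self_mem_Ici
      have htnn : (0:ℝ) ≤ (W 0 + 1) / a := by positivity
      have hstep := hlin Set.self_mem_Ici (Set.mem_Ici.2 htnn) htnn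
      have hstep' : W ((W 0 + 1) / a) + a * ((W 0 + 1) / a) ≤ W 0 + a * 0 := hstep
      have hcalc : a * ((W 0 + 1) / a) = W 0 + 1 := by field_simp
      have hWtnn := hWnn ((W 0 + 1) / a) (Set.mem_Ici.2 htnn)
      rw [mul_zero, add_zero] at hstep'
      linarith
    -- convergence
    rw [Metric.tendsto_atTop]
    intro ε hε
    set ε₂ : ℝ := min ε ε₁ with hε₂
    have hε₂pos : 0 < ε₂ := lt_min hε (by rw [hε₁]; exact half_pos hm0pos)
    set Q : Set (Cplx n) := Metric.closedBall zs ε₁ ∩ {y | ε₂ ≤ dist y zs} with hQ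
    by_cases hQne : Q.Nonempty
    · have hQclosed : IsClosed Q := IsClosed.inter Metric.isClosed_closedBall
        (isClosed_le continuous_const (continuous_id.dist continuous_const))
      have hQcpt : IsCompact Q := IsCompact.of_isClosed_subset
        (isCompact_closedBall zs ε₁) hQclosed (fun y hy => hy.1)
      have hQpos : ∀ y ∈ Q, y ∈ DZT.pos := by
        rintro y ⟨hy1, _⟩
        apply hballpos
        rw [Metric.mem_closedBall, dist_eq_norm] at hy1
        exact hy1
      obtain ⟨yq, hyq, hyqmin⟩ := hQcpt.exists_isMinOn hQne
        (fun y hy => (lyapV_continuousAt hzs (hQpos y hy)).continuousWithinAt)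
      set η : ℝ := lyapV zs yq with hη
      have hηpos : 0 < η := by
        apply lyapV_pos hzs (hQpos yq hyq)
        intro hcon
        have := hyq.2
        rw [hcon] at this
        simp only [Set.mem_setOf_eq, dist_self] at this
        linarith
      have hclt : c < η := by rw [hceq]; exact hηpos
      rw [hc] at hclt
      obtain ⟨_, ⟨t₀, ht₀, rfl⟩, hlt⟩ := exists_lt_of_csInf_lt hWne hclt
      refine ⟨t₀, ?_⟩
      intro t ht
      have htIci : t ∈ Set.Ici (0:ℝ) := le_trans ht₀ ht
      have hWt : W t < η := lt_of_le_of_lt (hWanti ht₀ htIci ht) hlt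
      by_contra hcon
      push_neg at hcon
      have hmemQ : x t ∈ Q := by
        constructor
        · rw [Metric.mem_closedBall, dist_eq_norm]
          exact (htraj t htIci).le
        · exact le_trans (min_le_left _ _) hcon  
      have hthis : η ≤ W t := hyqmin hmemQ
      linarith [hthis, hWt]
    · refine ⟨0, ?_⟩
      intro t ht
      have htIci : t ∈ Set.Ici (0:ℝ) := ht
      by_contra hcon
      push_neg at hcon
      apply hQne
      refine ⟨x t, ?_, le_trans (min_le_left _ _) hcon⟩
      rw [Metric.mem_closedBall, dist_eq_norm]
      exact (htraj t htIci).le
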